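/- arXiv:1810.12728 — 3 statements merged into one kernel-verified Lean document; each statement's English description precedes it below -/
import Mathlib

section
/- Let K → 𝒜 →ⁱ ℬ →^π 𝒞 → K be a short exact sequence of graded connected bicommutative Hopf algebras over a field K, and let f : 𝒞 → ℬ be a graded K-linear map with π ∘ f = id_𝒞. Then the map f̄ : 𝒜 ⊗ 𝒞 → ℬ, a ⊗ c ↦ a·f(c), is an isomorphism of 𝒜-modules. -/
open TensorProduct

noncomputable section

/-- A bicommutative Hopf algebra structure on a `K`-module `X`, recorded through plain
linear-algebra data (multiplication, unit, comultiplication, counit, antipode) together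
with all the (co)algebra, bialgebra and antipode axioms. -/
structure HopfStr (K : Type*) [Field K] (X : Type*) [AddCommGroup X] [Module K X] where
  mul : X →ₗ[K] X →ₗ[K] X
  one : X
  comul : X →ₗ[K] X ⊗[K] X
  counit : X →ₗ[K] K
  antipode : X →ₗ[K] X
  mul_assoc' : ∀ x y z : X, mul (mul x y) z = mul x (mul y z)
  mul_comm' : ∀ x y : X, mul x y = mul y x
  one_mul' : ∀ x : X, mul one x = x
  coassoc : (TensorProduct.assoc K X X X).toLinearMap.comp
        ((TensorProduct.map comul LinearMap.id).comp comul)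
      = (TensorProduct.map LinearMap.id comul).comp comul
  cocomm : (TensorProduct.comm K X X).toLinearMap.comp comul = comul
  counit_comul : (TensorProduct.lid K X).toLinearMap.comp
      ((TensorProduct.map counit LinearMap.id).comp comul) = LinearMap.id
  comul_one : comul one = one ⊗ₜ[K] one
  counit_one : counit one = 1
  comul_mul : ∀ x y : X, comul (mul x y)
      = TensorProduct.homTensorHomMap (RingHom.id K) X X X X
          (TensorProduct.map mul mul (comul x)) (comul y)
  counit_mul : ∀ x y : X, counit (mul x y) = counit x * counit y
  antipode_mul : ∀ x : X,
      TensorProduct.lift mul (TensorProduct.map antipode LinearMap.id (comul x))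
        = counit x • one

/-- A graded (by `ℕ`) bicommutative Hopf algebra structure: a Hopf structure together with
a grading for which all the structure maps are graded. -/
structure GradedHopfStr (K : Type*) [Field K] (X : Type*) [AddCommGroup X] [Module K X]
    extends HopfStr K X where
  grading : ℕ → Submodule K X
  is_internal : DirectSum.IsInternal grading
  one_mem : one ∈ grading 0
  mul_graded : ∀ m n : ℕ, ∀ x ∈ grading m, ∀ y ∈ grading n, mul x y ∈ grading (m + n)
  comul_graded : ∀ n : ℕ, ∀ x ∈ grading n,
      comul x ∈ ⨆ p : {p : ℕ × ℕ // p.1 + p.2 = n},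
        LinearMap.range (TensorProduct.map (grading p.1.1).subtype (grading p.1.2).subtype)
  counit_graded : ∀ n : ℕ, 0 < n → ∀ x ∈ grading n, counit x = 0
  antipode_graded : ∀ n : ℕ, ∀ x ∈ grading n, antipode x ∈ grading n

/-- A graded Hopf algebra is connected if its degree-`0` part is spanned by the unit. -/
def GradedHopfStr.Connected {K : Type*} [Field K] {X : Type*} [AddCommGroup X] [Module K X]
    (S : GradedHopfStr K X) : Prop :=
  S.grading 0 = Submodule.span K {S.one}

/-- A linear map is a homomorphism of Hopf algebras if it commutes with all structure maps. -/
structure IsHopfHom {K : Type*} [Field K] {X Y : Type*} [AddCommGroup X] [Module K X]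
    [AddCommGroup Y] [Module K Y] (SX : HopfStr K X) (SY : HopfStr K Y)
    (f : X →ₗ[K] Y) : Prop where
  map_mul : ∀ x y : X, f (SX.mul x y) = SY.mul (f x) (f y)
  map_one : f SX.one = SY.one
  map_comul : SY.comul.comp f = (TensorProduct.map f f).comp SX.comul
  map_counit : SY.counit.comp f = SX.counit

/-- `K → A → B → C → K` is a short exact sequence of bicommutative Hopf algebras:
`i` and `π` are Hopf homomorphisms, `i` is injective, `π` is surjective, the image of `i`
is the (Hopf) kernel `{b | (id ⊗ π)(Δ b) = b ⊗ 1}` of `π`, and the kernel of `π` is the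
ideal `A₊B` generated by the image under `i` of the augmentation ideal of `A`. -/
def IsHopfSES {K : Type*} [Field K] {A B C : Type*}
    [AddCommGroup A] [Module K A] [AddCommGroup B] [Module K B] [AddCommGroup C] [Module K C]
    (SA : HopfStr K A) (SB : HopfStr K B) (SC : HopfStr K C)
    (i : A →ₗ[K] B) (π : B →ₗ[K] C) : Prop :=
  IsHopfHom SA SB i ∧ IsHopfHom SB SC π ∧
  Function.Injective i ∧ Function.Surjective π ∧
  (LinearMap.range i
    = LinearMap.ker ((TensorProduct.map LinearMap.id π).comp SB.comul
        - (TensorProduct.mk K B C).flip SC.one)) ∧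
  (LinearMap.ker π
    = Submodule.span K {y : B | ∃ a ∈ LinearMap.ker SA.counit, ∃ b : B, y = SB.mul (i a) b})


/-!
STATEMENT 1.
Let `K → 𝒜 →ⁱ ℬ →^π 𝒞 → K` be a short exact sequence of graded connected bicommutative
Hopf algebras over a field `K`, and let `f : 𝒞 → ℬ` be a graded `K`-linear map with
`π ∘ f = id`.  Then `f̄ : 𝒜 ⊗ 𝒞 → ℬ`, `a ⊗ c ↦ a · f(c)`, is an isomorphism of
`𝒜`-modules (where `ℬ` is an `𝒜`-module via `i`): i.e. it is `𝒜`-linear and bijective.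
-/
lemma exists_graded_proj {K X : Type*} [Field K] [AddCommGroup X] [Module K X]
    (g : ℕ → Submodule K X) (h : DirectSum.IsInternal g) :
    ∃ P : ℕ → X →ₗ[K] X, ∀ q m : ℕ, ∀ x ∈ g m, P q x = if q = m then x else 0 := by
  classical
  let e := LinearEquiv.ofBijective (DirectSum.coeLinearMap g) h
  refine ⟨fun q => (g q).subtype ∘ₗ (DirectSum.component K ℕ (fun i => g i) q) ∘ₗ
      e.symm.toLinearMap, ?_⟩
  intro q m x hx
  have he : e ((DirectSum.lof K ℕ (fun i => (g i : Type _)) m) ⟨x, hx⟩) = x := by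
    simp [e, LinearEquiv.ofBijective_apply, DirectSum.lof_eq_of,
      DirectSum.coeLinearMap_of]
    exact DirectSum.coeLinearMap_of _ _ _
  have hsymm : e.symm x = (DirectSum.lof K ℕ (fun i => (g i : Type _)) m) ⟨x, hx⟩ := by
    rw [LinearEquiv.symm_apply_eq]; exact he.symm
  simp only [LinearMap.comp_apply, LinearEquiv.coe_coe, hsymm]
  rcases eq_or_ne q m with rfl | hqm
  · rw [if_pos rfl, DirectSum.component.lof_self]; rfl
  · rw [if_neg hqm, DirectSum.component.of, dif_neg (Ne.symm hqm)]
    rfl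

lemma map_id_sub_comm {K : Type*} [Field K] {M N P : Type*} [AddCommGroup M] [Module K M]
    [AddCommGroup N] [Module K N] [AddCommGroup P] [Module K P] (V : Submodule K P)
    (φ : M →ₗ[K] N) (z : M ⊗[K] V) :
    (TensorProduct.map φ LinearMap.id) ((TensorProduct.map LinearMap.id V.subtype) z)
      = (TensorProduct.map LinearMap.id V.subtype) ((TensorProduct.map φ LinearMap.id) z) := by
  rw [← LinearMap.comp_apply, ← LinearMap.comp_apply, ← TensorProduct.map_comp,
    ← TensorProduct.map_comp, LinearMap.id_comp, LinearMap.comp_id,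
    LinearMap.id_comp, LinearMap.comp_id]

set_option maxHeartbeats 1000000 in
theorem stmt1
    (K : Type*) [Field K]
    (A B C : Type*)
    [AddCommGroup A] [Module K A] [AddCommGroup B] [Module K B] [AddCommGroup C] [Module K C]
    (SA : GradedHopfStr K A) (SB : GradedHopfStr K B) (SC : GradedHopfStr K C)
    (hA : SA.Connected) (hB : SB.Connected) (hC : SC.Connected)
    (i : A →ₗ[K] B) (π : B →ₗ[K] C)
    (hi : ∀ n : ℕ, ∀ a ∈ SA.grading n, i a ∈ SB.grading n)
    (hπ : ∀ n : ℕ, ∀ b ∈ SB.grading n, π b ∈ SC.grading n)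
    (hses : IsHopfSES SA.toHopfStr SB.toHopfStr SC.toHopfStr i π)
    (f : C →ₗ[K] B)
    (hf : ∀ n : ℕ, ∀ c ∈ SC.grading n, f c ∈ SB.grading n)
    (hsec : π.comp f = LinearMap.id) :
    -- `f̄ = TensorProduct.lift (a ↦ c ↦ SB.mul (i a) (f c))` is bijective, and it is a
    -- homomorphism of `𝒜`-modules for the action of `𝒜` on `𝒜 ⊗ 𝒞` through the first
    -- factor and on `ℬ` through `i` and multiplication.
    Function.Bijective
      (TensorProduct.lift (((SB.mul.comp i).compl₂ f) : A →ₗ[K] C →ₗ[K] B))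
    ∧ ∀ (a a' : A) (c : C),
        TensorProduct.lift (((SB.mul.comp i).compl₂ f)) ((SA.mul a a') ⊗ₜ[K] c)
          = SB.mul (i a) (TensorProduct.lift (((SB.mul.comp i).compl₂ f)) (a' ⊗ₜ[K] c)) := by
  classical
  obtain ⟨hiA, hiB, hinj, hsurjπ, hker1, hker2⟩ := hses
  set fbar : A ⊗[K] C →ₗ[K] B := TensorProduct.lift (((SB.mul.comp i).compl₂ f)) with hfbar
  have fbar_tmul : ∀ (a : A) (c : C), fbar (a ⊗ₜ[K] c) = SB.mul (i a) (f c) := by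
    intro a c
    simp [hfbar, TensorProduct.lift.tmul]
  have hmod : ∀ (a a' : A) (c : C),
      fbar ((SA.mul a a') ⊗ₜ[K] c) = SB.mul (i a) (fbar (a' ⊗ₜ[K] c)) := by
    intro a a' c
    rw [fbar_tmul, fbar_tmul, hiA.map_mul, SB.mul_assoc']
  have hπf : ∀ c : C, π (f c) = c := by
    intro c
    have := LinearMap.congr_fun hsec c
    simpa using this
  have Bmul_one : ∀ x : B, SB.mul x SB.one = x := fun x => by
    rw [SB.mul_comm', SB.one_mul']
  refine ⟨⟨?_, ?_⟩, hmod⟩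
  · -- ============ INJECTIVITY ============
    obtain ⟨r, hr⟩ := i.exists_leftInverse_of_injective (LinearMap.ker_eq_bot.mpr hinj)
    have hri : ∀ a : A, r (i a) = a := by
      intro a
      have := LinearMap.congr_fun hr a
      simpa using this
    set ρ : B →ₗ[K] B ⊗[K] C := (TensorProduct.map LinearMap.id π).comp SB.comul with hρ
    set L : B ⊗[K] C →ₗ[K] C :=
      (TensorProduct.lid K C).toLinearMap.comp
        (TensorProduct.map SB.counit LinearMap.id) with hL
    set g : A ⊗[K] C →ₗ[K] A ⊗[K] C :=
      (TensorProduct.map r LinearMap.id).comp (ρ.comp fbar) with hg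
    set W : ℕ → Submodule K (B ⊗[K] C) := fun t =>
      ⨆ s : {s : ℕ // s < t}, LinearMap.range
        (TensorProduct.map (LinearMap.id : B →ₗ[K] B) (SC.grading s.1).subtype) with hW
    set FF : ℕ → Submodule K (A ⊗[K] C) := fun t =>
      ⨆ s : {s : ℕ // s ≤ t}, LinearMap.range
        (TensorProduct.map (LinearMap.id : A →ₗ[K] A) (SC.grading s.1).subtype) with hFF
    set Fs : ℕ → Submodule K (A ⊗[K] C) := fun t =>
      ⨆ s : {s : ℕ // s < t}, LinearMap.range
        (TensorProduct.map (LinearMap.id : A →ₗ[K] A) (SC.grading s.1).subtype) with hFs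
    have range_le_W : ∀ (t s : ℕ), s < t →
        LinearMap.range (TensorProduct.map (LinearMap.id : B →ₗ[K] B)
          (SC.grading s).subtype) ≤ W t := by
      intro t s hst
      simp only [hW]
      exact le_iSup_of_le ⟨s, hst⟩ le_rfl
    have FFmono : ∀ {q q' : ℕ}, q ≤ q' → FF q ≤ FF q' := by
      intro q q' hqq'
      simp only [hFF]
      exact iSup_le fun s => le_iSup_of_le ⟨s.1, s.2.trans hqq'⟩ le_rfl
    have Fsmono : ∀ {s q : ℕ}, s ≤ q → Fs s ≤ Fs q := by
      intro s q h
      simp only [hFs]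
      exact iSup_le fun s' => le_iSup_of_le ⟨s'.1, lt_of_lt_of_le s'.2 h⟩ le_rfl
    have FsleFF : ∀ q : ℕ, Fs (q + 1) ≤ FF q := by
      intro q
      simp only [hFs, hFF]
      exact iSup_le fun s' => le_iSup_of_le ⟨s'.1, Nat.lt_succ_iff.mp s'.2⟩ le_rfl
    have Fs_zero : Fs 0 = ⊥ := by
      simp only [hFs]
      have : IsEmpty {s : ℕ // s < 0} := ⟨fun s => Nat.not_lt_zero s.1 s.2⟩
      exact iSup_of_empty _
    have ρi : ∀ a : A, ρ (i a) = (i a) ⊗ₜ[K] SC.one := by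
      intro a
      have h1 : i a ∈ LinearMap.range i := ⟨a, rfl⟩
      rw [hker1, LinearMap.mem_ker, LinearMap.sub_apply] at h1
      have h2 := sub_eq_zero.mp h1
      simpa using h2
    have mapπ_hom : ∀ u v : B ⊗[K] B,
        (TensorProduct.map LinearMap.id π)
          (TensorProduct.homTensorHomMap (RingHom.id K) B B B B (TensorProduct.map SB.mul SB.mul u) v)
        = TensorProduct.map₂ SB.mul SC.mul
            ((TensorProduct.map LinearMap.id π) u) ((TensorProduct.map LinearMap.id π) v) := by
      intro u v
      induction u using TensorProduct.induction_on with
      | zero => simp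
      | tmul b₁ b₂ =>
        induction v using TensorProduct.induction_on with
        | zero => simp
        | tmul b₁' b₂' =>
          simp only [TensorProduct.map_tmul, TensorProduct.homTensorHomMap_apply,
            TensorProduct.map₂_apply_tmul, LinearMap.id_coe, id_eq]
          rw [hiB.map_mul]
        | add v₁ v₂ h₁ h₂ => simp only [map_add, h₁, h₂]
      | add u₁ u₂ h₁ h₂ => simp only [map_add, LinearMap.add_apply, h₁, h₂]
    have ρmul : ∀ b b' : B, ρ (SB.mul b b')
        = TensorProduct.map₂ SB.mul SC.mul (ρ b) (ρ b') := by
      intro b b'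
      simp only [hρ, LinearMap.comp_apply]
      rw [SB.comul_mul]
      exact mapπ_hom _ _
    have Lρ : ∀ b : B, L (ρ b) = π b := by
      intro b
      have comm : ∀ z : B ⊗[K] B,
          (TensorProduct.lid K C) ((TensorProduct.map SB.counit LinearMap.id)
            ((TensorProduct.map LinearMap.id π) z))
          = π ((TensorProduct.lid K B) ((TensorProduct.map SB.counit LinearMap.id) z)) := by
        intro z
        induction z using TensorProduct.induction_on with
        | zero => simp
        | tmul x y =>
          simp [TensorProduct.map_tmul, TensorProduct.lid_tmul]
        | add z₁ z₂ h₁ h₂ => simp only [map_add, h₁, h₂]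
      have hcc := LinearMap.congr_fun SB.counit_comul b
      simp only [LinearMap.comp_apply, LinearEquiv.coe_coe, LinearMap.id_apply] at hcc
      simp only [hL, hρ, LinearMap.comp_apply, LinearEquiv.coe_coe]
      rw [comm (SB.comul b), hcc]
    have lead : ∀ t : ℕ, ∀ c ∈ SC.grading t, ρ (f c) - SB.one ⊗ₜ[K] c ∈ W t := by
      intro t c hc
      have h1 : ρ (f c) ∈
          LinearMap.range (TensorProduct.map (SB.grading 0).subtype (SC.grading t).subtype)
            ⊔ W t := by
        have hfc : f c ∈ SB.grading t := hf t c hc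
        have hΔ : ρ (f c) ∈ Submodule.map (TensorProduct.map (LinearMap.id : B →ₗ[K] B) π)
            (⨆ p : {p : ℕ × ℕ // p.1 + p.2 = t}, LinearMap.range
              (TensorProduct.map (SB.grading p.1.1).subtype (SB.grading p.1.2).subtype)) := by
          rw [hρ]
          exact Submodule.mem_map_of_mem (SB.comul_graded t (f c) hfc)
        rw [Submodule.map_iSup] at hΔ
        refine SetLike.le_def.mp (iSup_le fun p => ?_) hΔ
        obtain ⟨⟨p₁, p₂⟩, hp⟩ := p
        dsimp only at hp ⊢
        rw [← LinearMap.range_comp]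
        have hcomp : (TensorProduct.map (LinearMap.id : B →ₗ[K] B) π).comp
            (TensorProduct.map (SB.grading p₁).subtype (SB.grading p₂).subtype)
            = (TensorProduct.map (SB.grading p₁).subtype (SC.grading p₂).subtype).comp
              (TensorProduct.map LinearMap.id
                ((π.comp (SB.grading p₂).subtype).codRestrict (SC.grading p₂)
                  (fun x => hπ p₂ x.1 x.2))) := by
          rw [← TensorProduct.map_comp, ← TensorProduct.map_comp,
            LinearMap.id_comp, LinearMap.comp_id]
          rfl
        rw [hcomp]
        rcases eq_or_ne p₂ t with rfl | hne
        · have hp₁ : p₁ = 0 := by omega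
          subst hp₁
          exact le_trans (LinearMap.range_comp_le_range _ _) le_sup_left
        · have hlt : p₂ < t := by omega
          refine le_trans (LinearMap.range_comp_le_range _ _) (le_trans ?_ le_sup_right)
          refine le_trans ?_ (range_le_W t p₂ hlt)
          have hsplit : TensorProduct.map (SB.grading p₁).subtype (SC.grading p₂).subtype
              = (TensorProduct.map LinearMap.id (SC.grading p₂).subtype).comp
                (TensorProduct.map (SB.grading p₁).subtype LinearMap.id) := by
            rw [← TensorProduct.map_comp, LinearMap.id_comp, LinearMap.comp_id]
          rw [hsplit]
          exact LinearMap.range_comp_le_range _ _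
      obtain ⟨u, hu, w, hw, huw⟩ := Submodule.mem_sup.mp h1
      have hudesc : ∀ u' ∈ LinearMap.range (TensorProduct.map (SB.grading 0).subtype
          (SC.grading t).subtype), ∃ c' ∈ SC.grading t, u' = SB.one ⊗ₜ[K] c' := by
        rintro u' ⟨z, rfl⟩
        induction z using TensorProduct.induction_on with
        | zero => exact ⟨0, (SC.grading t).zero_mem, by simp⟩
        | tmul x y =>
          have hx0 : (x : B) ∈ Submodule.span K {SB.one} := by
            rw [← hB]; exact x.2
          obtain ⟨μ, hμ⟩ := Submodule.mem_span_singleton.mp hx0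
          refine ⟨μ • y.1, Submodule.smul_mem _ _ y.2, ?_⟩
          rw [TensorProduct.map_tmul]
          rw [Submodule.coe_subtype, Submodule.coe_subtype, ← hμ, TensorProduct.smul_tmul]
        | add z₁ z₂ h₁ h₂ =>
          obtain ⟨c₁, hc₁, e₁⟩ := h₁
          obtain ⟨c₂, hc₂, e₂⟩ := h₂
          exact ⟨c₁ + c₂, add_mem hc₁ hc₂, by rw [map_add, e₁, e₂, TensorProduct.tmul_add]⟩
      obtain ⟨c', hc't, hc'⟩ := hudesc u hu
      have LW : ∀ w' ∈ W t, L w' ∈ ⨆ s : {s : ℕ // s < t}, SC.grading s.1 := by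
        intro w' hw'
        simp only [hW] at hw'
        refine Submodule.iSup_induction
          (motive := fun w'' => L w'' ∈ ⨆ s : {s : ℕ // s < t}, SC.grading s.1)
          _ hw' (fun s x hx => ?_)
          (by show L 0 ∈ _; rw [map_zero]; exact zero_mem _)
          (fun x y h₁ h₂ => by show L (x + y) ∈ _; rw [map_add]; exact add_mem h₁ h₂)
        obtain ⟨z, rfl⟩ := hx
        show L ((TensorProduct.map LinearMap.id (SC.grading s.1).subtype) z)
          ∈ ⨆ s : {s : ℕ // s < t}, SC.grading s.1
        have hmem : ∀ z' : B ⊗[K] (SC.grading s.1),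
            L ((TensorProduct.map LinearMap.id (SC.grading s.1).subtype) z')
              ∈ SC.grading s.1 := by
          intro z'
          induction z' using TensorProduct.induction_on with
          | zero => simp
          | tmul b cs =>
            simp only [TensorProduct.map_tmul, hL, LinearMap.comp_apply,
              LinearMap.id_coe, id_eq, LinearEquiv.coe_coe, TensorProduct.lid_tmul]
            exact Submodule.smul_mem _ _ cs.2
          | add z₁ z₂ h₁ h₂ => rw [map_add, map_add]; exact add_mem h₁ h₂
        exact Submodule.mem_iSup_of_mem s (hmem z)
      have hLc : L (ρ (f c)) = c := by rw [Lρ, hπf]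
      have hL1 : ∀ c'' : C, L (SB.one ⊗ₜ[K] c'') = c'' := by
        intro c''
        simp [hL, TensorProduct.lid_tmul, SB.counit_one]
      have hc'eq : c' = c - L w := by
        have hsum : L u + L w = c := by rw [← map_add, huw, hLc]
        rw [hc', hL1] at hsum
        rw [← hsum]
        abel
      have hone_tensor : ∀ x ∈ (⨆ s : {s : ℕ // s < t}, SC.grading s.1),
          SB.one ⊗ₜ[K] x ∈ W t := by
        intro x hx
        refine Submodule.iSup_induction
          (motive := fun x => SB.one ⊗ₜ[K] x ∈ W t)
          _ hx (fun s y hy => ?_)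
          (by show SB.one ⊗ₜ[K] (0 : C) ∈ W t
              rw [TensorProduct.tmul_zero]; exact zero_mem _)
          (fun y z h₁ h₂ => by
            show SB.one ⊗ₜ[K] (y + z) ∈ W t
            rw [TensorProduct.tmul_add]; exact add_mem h₁ h₂)
        show SB.one ⊗ₜ[K] y ∈ W t
        refine SetLike.le_def.mp (range_le_W t s.1 s.2) ⟨SB.one ⊗ₜ[K] ⟨y, hy⟩, ?_⟩
        simp
      have hfin : ρ (f c) - SB.one ⊗ₜ[K] c = -(SB.one ⊗ₜ[K] (L w)) + w := by
        rw [← huw, hc', hc'eq, TensorProduct.tmul_sub]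
        abel
      rw [hfin]
      exact add_mem (neg_mem (hone_tensor _ (LW w hw))) hw
    have mulC_one : SC.mul SC.one = LinearMap.id := LinearMap.ext SC.one_mul'
    have push : ∀ (φ : B →ₗ[K] B) (t : ℕ), ∀ x ∈ W t,
        (TensorProduct.map φ LinearMap.id) x ∈ W t := by
      intro φ t x hx
      simp only [hW] at hx ⊢
      refine Submodule.iSup_induction
        (motive := fun y => (TensorProduct.map φ LinearMap.id) y ∈ ⨆ s : {s : ℕ // s < t},
          LinearMap.range (TensorProduct.map (LinearMap.id : B →ₗ[K] B)
            (SC.grading s.1).subtype))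
        _ hx (fun s y hy => ?_)
        (by show (TensorProduct.map φ LinearMap.id) 0 ∈ _
            rw [map_zero]; exact zero_mem _)
        (fun y z h₁ h₂ => by
          show (TensorProduct.map φ LinearMap.id) (y + z) ∈ _
          rw [map_add]; exact add_mem h₁ h₂)
      obtain ⟨z, rfl⟩ := hy
      show (TensorProduct.map φ LinearMap.id)
        ((TensorProduct.map LinearMap.id (SC.grading s.1).subtype) z) ∈ _
      exact Submodule.mem_iSup_of_mem s
        ⟨(TensorProduct.map φ LinearMap.id) z, (map_id_sub_comm _ _ _).symm⟩
    have pushr : ∀ (t : ℕ), ∀ x ∈ W t, (TensorProduct.map r LinearMap.id) x ∈ Fs t := by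
      intro t x hx
      simp only [hW] at hx
      simp only [hFs]
      refine Submodule.iSup_induction
        (motive := fun y => (TensorProduct.map r LinearMap.id) y ∈ ⨆ s : {s : ℕ // s < t},
          LinearMap.range (TensorProduct.map (LinearMap.id : A →ₗ[K] A)
            (SC.grading s.1).subtype))
        _ hx (fun s y hy => ?_)
        (by show (TensorProduct.map r LinearMap.id) 0 ∈ _
            rw [map_zero]; exact zero_mem _)
        (fun y z h₁ h₂ => by
          show (TensorProduct.map r LinearMap.id) (y + z) ∈ _
          rw [map_add]; exact add_mem h₁ h₂)
      obtain ⟨z, rfl⟩ := hy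
      show (TensorProduct.map r LinearMap.id)
        ((TensorProduct.map LinearMap.id (SC.grading s.1).subtype) z) ∈ _
      exact Submodule.mem_iSup_of_mem s
        ⟨(TensorProduct.map r LinearMap.id) z, (map_id_sub_comm _ _ _).symm⟩
    have gstep : ∀ (a : A) (t : ℕ), ∀ c ∈ SC.grading t,
        g (a ⊗ₜ[K] c) - a ⊗ₜ[K] c ∈ Fs t := by
      intro a t c hc
      have h1 : ρ (fbar (a ⊗ₜ[K] c))
          = TensorProduct.map₂ SB.mul SC.mul ((i a) ⊗ₜ[K] SC.one) (ρ (f c)) := by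
        rw [fbar_tmul, ρmul, ρi]
      have hw : ρ (f c) - SB.one ⊗ₜ[K] c ∈ W t := lead t c hc
      have hsplit : ρ (f c) = SB.one ⊗ₜ[K] c + (ρ (f c) - SB.one ⊗ₜ[K] c) := by abel
      have hterm1 : TensorProduct.map₂ SB.mul SC.mul ((i a) ⊗ₜ[K] SC.one)
          (SB.one ⊗ₜ[K] c) = (i a) ⊗ₜ[K] c := by
        rw [TensorProduct.map₂_apply_tmul, TensorProduct.map_tmul, Bmul_one, SC.one_mul']
      have hgval : g (a ⊗ₜ[K] c) = a ⊗ₜ[K] c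
          + (TensorProduct.map r LinearMap.id)
            ((TensorProduct.map (SB.mul (i a)) LinearMap.id)
              (ρ (f c) - SB.one ⊗ₜ[K] c)) := by
        simp only [hg, LinearMap.comp_apply]
        rw [h1, hsplit, map_add, hterm1]
        rw [TensorProduct.map₂_apply_tmul, mulC_one]
        rw [map_add, TensorProduct.map_tmul, hri]
        simp only [LinearMap.id_coe, id_eq]
        abel
      rw [hgval, add_sub_cancel_left]
      exact pushr t _ (push (SB.mul (i a)) t _ hw)
    have gstep' : ∀ q : ℕ, ∀ x ∈ FF q, g x - x ∈ Fs q := by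
      intro q x hx
      simp only [hFF] at hx
      refine Submodule.iSup_induction
        (motive := fun y => g y - y ∈ Fs q)
        _ hx (fun s y hy => ?_)
        (by show g 0 - 0 ∈ Fs q
            rw [map_zero, sub_zero]; exact zero_mem _)
        (fun y z h₁ h₂ => ?_)
      · obtain ⟨z, rfl⟩ := hy
        show g ((TensorProduct.map LinearMap.id (SC.grading s.1).subtype) z)
            - (TensorProduct.map LinearMap.id (SC.grading s.1).subtype) z ∈ Fs q
        induction z using TensorProduct.induction_on with
        | zero => simpa using (Fs q).zero_mem
        | tmul a cs =>
          have hgs := gstep a s.1 cs.1 cs.2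
          rw [TensorProduct.map_tmul]
          simp only [LinearMap.id_coe, id_eq, Submodule.coe_subtype]
          exact Fsmono s.2 hgs
        | add z₁ z₂ h₁ h₂ =>
          rw [map_add]
          have heq : g ((TensorProduct.map LinearMap.id (SC.grading s.1).subtype) z₁
                + (TensorProduct.map LinearMap.id (SC.grading s.1).subtype) z₂)
              - ((TensorProduct.map LinearMap.id (SC.grading s.1).subtype) z₁
                + (TensorProduct.map LinearMap.id (SC.grading s.1).subtype) z₂)
              = (g ((TensorProduct.map LinearMap.id (SC.grading s.1).subtype) z₁)
                  - (TensorProduct.map LinearMap.id (SC.grading s.1).subtype) z₁)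
                + (g ((TensorProduct.map LinearMap.id (SC.grading s.1).subtype) z₂)
                  - (TensorProduct.map LinearMap.id (SC.grading s.1).subtype) z₂) := by
            rw [map_add]; abel
          rw [heq]
          exact add_mem h₁ h₂
      · show g (y + z) - (y + z) ∈ Fs q
        have heq : g (y + z) - (y + z) = (g y - y) + (g z - z) := by
          rw [map_add]; abel
        rw [heq]
        exact add_mem h₁ h₂
    have inj0 : ∀ q : ℕ, ∀ x ∈ FF q, g x = 0 → x = 0 := by
      intro q
      induction q with
      | zero =>
        intro x hx hgx
        have h1 := gstep' 0 x hx
        rw [hgx, Fs_zero, Submodule.mem_bot, zero_sub, neg_eq_zero] at h1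
        exact h1
      | succ q IH =>
        intro x hx hgx
        have h1 := gstep' (q + 1) x hx
        rw [hgx, zero_sub] at h1
        have h2 : x ∈ FF q := by
          have := FsleFF q h1
          simpa using (FF q).neg_mem this
        exact IH x h2 hgx
    have memFF : ∀ x : A ⊗[K] C, ∃ q, x ∈ FF q := by
      intro x
      induction x using TensorProduct.induction_on with
      | zero => exact ⟨0, (FF 0).zero_mem⟩
      | tmul a c =>
        have hc : c ∈ ⨆ m, SC.grading m := by
          rw [SC.is_internal.submodule_iSup_eq_top]; trivial
        refine Submodule.iSup_induction (motive := fun c => ∃ q, a ⊗ₜ[K] c ∈ FF q) _ hc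
          (fun m y hy => ?_)
          ⟨0, by rw [TensorProduct.tmul_zero]; exact zero_mem _⟩ (fun y z h₁ h₂ => ?_)
        · refine ⟨m, ?_⟩
          simp only [hFF]
          exact Submodule.mem_iSup_of_mem ⟨m, le_rfl⟩ ⟨a ⊗ₜ[K] ⟨y, hy⟩, by simp⟩
        · obtain ⟨q₁, h₁⟩ := h₁
          obtain ⟨q₂, h₂⟩ := h₂
          exact ⟨max q₁ q₂, by
            rw [TensorProduct.tmul_add]
            exact add_mem (FFmono (le_max_left _ _) h₁) (FFmono (le_max_right _ _) h₂)⟩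
      | add x y hx hy =>
        obtain ⟨q₁, h₁⟩ := hx
        obtain ⟨q₂, h₂⟩ := hy
        exact ⟨max q₁ q₂, add_mem (FFmono (le_max_left _ _) h₁)
          (FFmono (le_max_right _ _) h₂)⟩
    have hker : ∀ x : A ⊗[K] C, fbar x = 0 → x = 0 := by
      intro x hx
      have hgx : g x = 0 := by
        simp only [hg, LinearMap.comp_apply, hx, map_zero]
      obtain ⟨q, hq⟩ := memFF x
      exact inj0 q x hq hgx
    intro x y hxy
    have hsub : fbar (x - y) = 0 := by rw [map_sub, hxy, sub_self]
    exact sub_eq_zero.mp (hker _ hsub)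
  · -- ============ SURJECTIVITY ============
    obtain ⟨PB, hPB⟩ := exists_graded_proj SB.grading SB.is_internal
    set T := LinearMap.range fbar with hT
    have f_mem : ∀ c : C, f c ∈ T := by
      intro c
      exact ⟨SA.one ⊗ₜ[K] c, by rw [fbar_tmul, hiA.map_one, SB.one_mul']⟩
    have Tmul : ∀ (a : A), ∀ x ∈ T, SB.mul (i a) x ∈ T := by
      rintro a x ⟨z, rfl⟩
      refine ⟨TensorProduct.map (SA.mul a) LinearMap.id z, ?_⟩
      have hcz : fbar ∘ₗ TensorProduct.map (SA.mul a) LinearMap.id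
          = SB.mul (i a) ∘ₗ fbar := by
        apply TensorProduct.ext'
        intro a' c
        simp only [LinearMap.comp_apply, TensorProduct.map_tmul, LinearMap.id_coe, id_eq]
        exact hmod a a' c
      exact LinearMap.congr_fun hcz z
    have stepY : ∀ q : ℕ, (∀ m, m < q → ∀ y ∈ SB.grading m, y ∈ T) →
        ∀ p, 1 ≤ p → ∀ a ∈ SA.grading p, ∀ y : B, PB q (SB.mul (i a) y) ∈ T := by
      intro q IH p hp a hap y
      have hy : y ∈ ⨆ m, SB.grading m := by
        rw [SB.is_internal.submodule_iSup_eq_top]; trivial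
      refine Submodule.iSup_induction
        (motive := fun z => PB q (SB.mul (i a) z) ∈ T)
        _ hy (fun m z hzm => ?_) ?_ ?_
      · show PB q (SB.mul (i a) z) ∈ T
        have hmem : SB.mul (i a) z ∈ SB.grading (p + m) :=
          SB.mul_graded p m (i a) (hi p a hap) z hzm
        rw [hPB q (p + m) _ hmem]
        by_cases hq : q = p + m
        · rw [if_pos hq]
          have hm : m < q := by omega
          exact Tmul a z (IH m hm z hzm)
        · rw [if_neg hq]; exact T.zero_mem
      · show PB q (SB.mul (i a) 0) ∈ T
        rw [map_zero, map_zero]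
        exact T.zero_mem
      · intro y₁ y₂ h₁ h₂
        show PB q (SB.mul (i a) (y₁ + y₂)) ∈ T
        rw [map_add, map_add]
        exact T.add_mem h₁ h₂
    have stepA : ∀ q : ℕ, (∀ m, m < q → ∀ y ∈ SB.grading m, y ∈ T) →
        ∀ a : A, SA.counit a = 0 → ∀ y : B, PB q (SB.mul (i a) y) ∈ T := by
      intro q IH a ha y
      have key : ∀ a' : A, PB q (SB.mul (i (a' - SA.counit a' • SA.one)) y) ∈ T := by
        intro a'
        have ha' : a' ∈ ⨆ m, SA.grading m := by
          rw [SA.is_internal.submodule_iSup_eq_top]; trivial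
        refine Submodule.iSup_induction
          (motive := fun z => PB q (SB.mul (i (z - SA.counit z • SA.one)) y) ∈ T) _ ha'
          (fun p x hx => ?_) ?_ ?_
        · show PB q (SB.mul (i (x - SA.counit x • SA.one)) y) ∈ T
          rcases Nat.eq_zero_or_pos p with rfl | hp
          · rw [hA] at hx
            obtain ⟨μ, rfl⟩ := Submodule.mem_span_singleton.mp hx
            have hz : μ • SA.one - SA.counit (μ • SA.one) • SA.one = 0 := by
              rw [map_smul, SA.counit_one]
              simp
            rw [hz]
            rw [map_zero]
            rw [show SB.mul (0 : B) = 0 from map_zero SB.mul]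
            rw [LinearMap.zero_apply, map_zero]
            exact T.zero_mem
          · have hx0 : SA.counit x = 0 := SA.counit_graded p hp x hx
            rw [hx0]
            rw [zero_smul, sub_zero]
            exact stepY q IH p hp x hx y
        · show PB q (SB.mul (i ((0 : A) - SA.counit (0 : A) • SA.one)) y) ∈ T
          rw [map_zero, zero_smul, sub_zero, map_zero]
          rw [show SB.mul (0 : B) = 0 from map_zero SB.mul]
          rw [LinearMap.zero_apply, map_zero]
          exact T.zero_mem
        · intro x₁ x₂ h₁ h₂
          show PB q (SB.mul (i ((x₁ + x₂) - SA.counit (x₁ + x₂) • SA.one)) y) ∈ T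
          have heq : (x₁ + x₂) - SA.counit (x₁ + x₂) • SA.one
              = (x₁ - SA.counit x₁ • SA.one) + (x₂ - SA.counit x₂ • SA.one) := by
            rw [map_add, add_smul]; abel
          rw [heq]
          simp only [map_add, LinearMap.add_apply]
          exact T.add_mem h₁ h₂
      have hkey := key a
      rw [ha, zero_smul, sub_zero] at hkey
      exact hkey
    have keyπ : ∀ q : ℕ, (∀ m, m < q → ∀ y ∈ SB.grading m, y ∈ T) →
        ∀ b ∈ LinearMap.ker π, PB q b ∈ T := by
      intro q IH b hb
      rw [hker2] at hb
      induction hb using Submodule.span_induction with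
      | mem z hz =>
        obtain ⟨a, ha, y, rfl⟩ := hz
        exact stepA q IH a (LinearMap.mem_ker.mp ha) y
      | zero => simpa using T.zero_mem
      | add x y hx hy hx' hy' => rw [map_add]; exact T.add_mem hx' hy'
      | smul c x hx hx' => rw [map_smul]; exact T.smul_mem c hx'
    have main : ∀ q : ℕ, ∀ b ∈ SB.grading q, b ∈ T := by
      intro q
      induction q using Nat.strong_induction_on with
      | _ q IH =>
        intro b hb
        have hk : b - f (π b) ∈ LinearMap.ker π := by
          rw [LinearMap.mem_ker, map_sub, hπf, sub_self]
        have hbk : b - f (π b) ∈ SB.grading q :=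
          sub_mem hb (hf q (π b) (hπ q b hb))
        have hP : PB q (b - f (π b)) = b - f (π b) := by
          rw [hPB q q _ hbk, if_pos rfl]
        have ht : b - f (π b) ∈ T := by
          rw [← hP]
          exact keyπ q (fun m hm y hy => IH m hm y hy) _ hk
        have hb' : b = (b - f (π b)) + f (π b) := by abel
        rw [hb']
        exact T.add_mem ht (f_mem _)
    intro b
    have hb : b ∈ ⨆ m, SB.grading m := by
      rw [SB.is_internal.submodule_iSup_eq_top]; trivial
    have hbT : b ∈ T := by
      refine Submodule.iSup_induction (motive := fun b => b ∈ T) _ hb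
        (fun m x hx => main m x hx) T.zero_mem
        (fun x y hx hy => T.add_mem hx hy)
    exact hbT
end
end

section
/- Let K → 𝒜 →ⁱ ℬ →^π 𝒞 → K be a short exact sequence of graded connected bicommutative Hopf algebras over a field K. Then for every n ≥ 0 there is an isomorphism 𝒜₊ⁿℬ/𝒜₊ⁿ⁺¹ℬ ≅ (𝒜₊ⁿ/𝒜₊ⁿ⁺¹) ⊗ 𝒞 which depends only on the short exact sequence (it does not depend on a choice of linear splitting of π), and which is natural with respect to morphisms of short exact sequences of such Hopf algebras. -/
open TensorProduct

noncomputable section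

/-- The powers `A₊ⁿ` of the augmentation ideal of a Hopf algebra (`A₊⁰ = A`). -/
def augPow {K : Type*} [Field K] {X : Type*} [AddCommGroup X] [Module K X]
    (S : HopfStr K X) : ℕ → Submodule K X
  | 0 => ⊤
  | n + 1 => Submodule.span K
      {x : X | ∃ a ∈ LinearMap.ker S.counit, ∃ b ∈ augPow S n, x = S.mul a b}

/-- The submodule `𝒜₊ⁿ ℬ` of `ℬ` (for the `𝒜`-module structure on `ℬ` given by `i`). -/
def augPowSmul {K : Type*} [Field K] {A B : Type*} [AddCommGroup A] [Module K A]
    [AddCommGroup B] [Module K B] (SA : HopfStr K A) (SB : HopfStr K B)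
    (i : A →ₗ[K] B) (n : ℕ) : Submodule K B :=
  Submodule.span K {y : B | ∃ a ∈ augPow SA n, ∃ b : B, y = SB.mul (i a) b}

/-!
STATEMENT 2.
For a short exact sequence `K → 𝒜 →ⁱ ℬ →^π 𝒞 → K` of graded connected bicommutative Hopf
algebras over a field `K` and any `n ≥ 0` there is an isomorphism
`𝒜₊ⁿℬ/𝒜₊ⁿ⁺¹ℬ ≅ (𝒜₊ⁿ/𝒜₊ⁿ⁺¹) ⊗ 𝒞` which depends only on the short exact sequence
(not on a choice of graded linear splitting of `π`), and which is natural with respect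
to morphisms of short exact sequences.

This is expressed by:
(1) a graded linear splitting `f` of `π` exists;
(2) for every graded splitting `f`, `a ⊗ c ↦ a·f(c)` induces an isomorphism
    `(𝒜₊ⁿ/𝒜₊ⁿ⁺¹) ⊗ 𝒞 ≅ 𝒜₊ⁿℬ/𝒜₊ⁿ⁺¹ℬ` (sending the class of `a ⊗ c` to the class of
    `i(a)·f(c)`);
(3) independence: for two graded splittings `f, g` the induced isomorphisms agree, i.e.
    `i(a)·f(c) − i(a)·g(c) ∈ 𝒜₊ⁿ⁺¹ℬ` for all `a ∈ 𝒜₊ⁿ`, `c ∈ 𝒞`;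
(4) naturality: for any morphism `(αA, αB, αC)` to a second short exact sequence, with
    graded splittings `f`, `g` of the two sequences, the two induced maps on the quotients
    agree: `αB(i(a)·f(c)) − i'(αA(a))·g(αC(c)) ∈ 𝒜'₊ⁿ⁺¹ℬ'`.
-/

/-! ### Auxiliary development -/

open scoped DirectSum

section AuxBasic

variable {K : Type*} [Field K] {X : Type*} [AddCommGroup X] [Module K X]

namespace HopfStr

variable (S : HopfStr K X)

lemma mul_one'' (x : X) : S.mul x S.one = x := by
  rw [S.mul_comm', S.one_mul']

lemma mul_smul_one (r : K) (x : X) : S.mul (r • S.one) x = r • x := by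
  rw [map_smul, LinearMap.smul_apply, S.one_mul']

lemma counit_comul_apply (x : X) :
    (TensorProduct.lid K X) ((TensorProduct.map S.counit LinearMap.id) (S.comul x)) = x := by
  have := congrArg (fun g => g x) S.counit_comul
  simpa using this

/-- right counit law, from cocommutativity -/
lemma comul_counit_apply (x : X) :
    (TensorProduct.rid K X) ((TensorProduct.map LinearMap.id S.counit) (S.comul x)) = x := by
  have hsym : (TensorProduct.comm K X X) (S.comul x) = S.comul x := by
    have := congrArg (fun g => g x) S.cocomm
    simpa using this
  have key : ∀ t : X ⊗[K] X,
      (TensorProduct.rid K X) ((TensorProduct.map LinearMap.id S.counit)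
        ((TensorProduct.comm K X X) t))
      = (TensorProduct.lid K X) ((TensorProduct.map S.counit LinearMap.id) t) := by
    intro t
    induction t using TensorProduct.induction_on with
    | zero => simp
    | tmul a b => simp [TensorProduct.smul_tmul']
    | add a b ha hb => simp [map_add, ha, hb]
  rw [← hsym, key, S.counit_comul_apply]

end HopfStr

namespace GradedHopfStr

variable (S : GradedHopfStr K X)

/-- The decomposition equivalence coming from internality of the grading. -/
noncomputable def decomp : (⨁ n : ℕ, S.grading n) ≃ₗ[K] X :=
  LinearEquiv.ofBijective (DirectSum.coeLinearMap S.grading) S.is_internal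

/-- Projection onto the degree `n` part. -/
noncomputable def proj (n : ℕ) : X →ₗ[K] X :=
  (S.grading n).subtype ∘ₗ (DirectSum.component K ℕ _ n) ∘ₗ S.decomp.symm.toLinearMap

lemma proj_mem (n : ℕ) (x : X) : S.proj n x ∈ S.grading n := (S.decomp.symm x n).2

lemma proj_of_mem {n : ℕ} {x : X} (hx : x ∈ S.grading n) : S.proj n x = x := by
  have h1 : S.decomp.symm x n = ⟨x, hx⟩ :=
    S.is_internal.ofBijective_coeLinearMap_of_mem hx
  show ((S.decomp.symm x) n : X) = x
  rw [h1]

lemma proj_of_mem_ne {m n : ℕ} {x : X} (hx : x ∈ S.grading n) (hmn : n ≠ m) :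
    S.proj m x = 0 := by
  have h1 : S.decomp.symm x m = 0 :=
    S.is_internal.ofBijective_coeLinearMap_of_mem_ne hmn hx
  show ((S.decomp.symm x) m : X) = 0
  rw [h1]; rfl

/-- Every element is a finite sum of its homogeneous components. -/
lemma exists_finset_sum_proj (x : X) :
    ∃ s : Finset ℕ, (∀ q ∉ s, S.proj q x = 0) ∧ ∑ q ∈ s, S.proj q x = x := by
  classical
  refine ⟨(S.decomp.symm x).support, fun q hq => ?_, ?_⟩
  · show ((S.decomp.symm x) q : X) = 0
    rw [DFinsupp.notMem_support_iff.mp hq]; rfl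
  · have h2 : ∑ q ∈ (S.decomp.symm x).support, S.proj q x
        = S.decomp.toLinearMap (∑ q ∈ (S.decomp.symm x).support,
            DirectSum.of _ q ((S.decomp.symm x) q)) := by
      rw [map_sum]
      exact Finset.sum_congr rfl fun q _ => (DirectSum.coeLinearMap_of _ q _).symm
    rw [h2, DirectSum.sum_support_of]
    exact S.decomp.apply_symm_apply x

end GradedHopfStr

end AuxBasic

section AuxSES

variable {K : Type*} [Field K]
variable {A B C : Type*} [AddCommGroup A] [Module K A] [AddCommGroup B] [Module K B]
  [AddCommGroup C] [Module K C]

section Ungraded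

variable {SA : HopfStr K A} {SB : HopfStr K B} {SC : HopfStr K C}
  {i : A →ₗ[K] B} {π : B →ₗ[K] C}

lemma i_mem_ker_pi (hses : IsHopfSES SA SB SC i π) {a : A}
    (ha : a ∈ LinearMap.ker SA.counit) : i a ∈ LinearMap.ker π := by
  rw [hses.2.2.2.2.2]
  exact Submodule.subset_span ⟨a, ha, SB.one, (SB.mul_one'' (i a)).symm⟩

lemma pi_i_eq (hses : IsHopfSES SA SB SC i π) (a : A) :
    π (i a) = SA.counit a • SC.one := by
  have h1 : a - SA.counit a • SA.one ∈ LinearMap.ker SA.counit := by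
    simp [LinearMap.mem_ker, map_sub, map_smul, SA.counit_one]
  have h2 : i (a - SA.counit a • SA.one) ∈ LinearMap.ker π := i_mem_ker_pi hses h1
  have h3 : π (i a) - SA.counit a • π (i SA.one) = 0 := by
    simpa [map_sub, map_smul] using h2
  have h4 : π (i SA.one) = SC.one := by
    rw [hses.1.map_one, hses.2.1.map_one]
  rw [← sub_eq_zero, ← h4]
  exact h3

lemma pi_mul_i (hses : IsHopfSES SA SB SC i π) (v : A) (b : B) :
    π (SB.mul (i v) b) = SA.counit v • π b := by
  rw [hses.2.1.map_mul, pi_i_eq hses, SC.mul_smul_one]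

end Ungraded

section Graded

variable {SA : GradedHopfStr K A} {SB : GradedHopfStr K B} {SC : GradedHopfStr K C}
  {i : A →ₗ[K] B} {π : B →ₗ[K] C}

/-- A graded surjection is surjective on each graded piece. -/
lemma graded_surj_piece (hπ : ∀ n : ℕ, ∀ b ∈ SB.grading n, π b ∈ SC.grading n)
    (hsurj : Function.Surjective π) :
    ∀ n : ℕ, ∀ c ∈ SC.grading n, ∃ b ∈ SB.grading n, π b = c := by
  intro n c hc
  obtain ⟨b, hb⟩ := hsurj c
  refine ⟨SB.proj n b, SB.proj_mem n b, ?_⟩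
  obtain ⟨s, hs0, hssum⟩ := SB.exists_finset_sum_proj b
  have hterm : ∀ q, q ≠ n → SC.proj n (π (SB.proj q b)) = 0 := fun q hq =>
    SC.proj_of_mem_ne (hπ q _ (SB.proj_mem q b)) hq
  have hsum2 : SC.proj n (π b) = π (SB.proj n b) := by
    conv_lhs => rw [← hssum]
    rw [map_sum, map_sum]
    by_cases hn : n ∈ s
    · rw [Finset.sum_eq_single_of_mem n hn (fun q _ hq => hterm q hq)]
      exact SC.proj_of_mem (hπ n _ (SB.proj_mem n b))
    · rw [Finset.sum_eq_zero (fun q hq => hterm q (fun h => hn (h ▸ hq))),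
        hs0 n hn, map_zero]
  rw [hsum2.symm, hb, SC.proj_of_mem hc]

/-- Existence of a graded linear splitting of a graded surjection. -/
lemma exists_graded_splitting (hπ : ∀ n : ℕ, ∀ b ∈ SB.grading n, π b ∈ SC.grading n)
    (hsurj : Function.Surjective π) :
    ∃ f : C →ₗ[K] B, (∀ n : ℕ, ∀ c ∈ SC.grading n, f c ∈ SB.grading n)
      ∧ π.comp f = LinearMap.id := by
  have hpiece : ∀ n : ℕ, ∃ sn : SC.grading n →ₗ[K] SB.grading n,
      ∀ c : SC.grading n, π (sn c : B) = (c : C) := by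
    intro n
    set πn : SB.grading n →ₗ[K] SC.grading n :=
      (π.domRestrict (SB.grading n)).codRestrict (SC.grading n)
        (fun b => hπ n b b.2) with hπn
    have hr : LinearMap.range πn = ⊤ := by
      rw [LinearMap.range_eq_top]
      intro c
      obtain ⟨b, hb, hbc⟩ := graded_surj_piece hπ hsurj n c c.2
      exact ⟨⟨b, hb⟩, Subtype.ext hbc⟩
    obtain ⟨sn, hsn⟩ := πn.exists_rightInverse_of_surjective hr
    refine ⟨sn, fun c => ?_⟩
    have := congrArg (fun g => ((g c : SC.grading n) : C)) hsn
    exact this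
  choose sec hsec using hpiece
  set f : C →ₗ[K] B :=
    (DirectSum.toModule K ℕ B (fun n => (SB.grading n).subtype ∘ₗ sec n)) ∘ₗ
      SC.decomp.symm.toLinearMap with hf
  have hhom : ∀ (n : ℕ) (c : C) (hc : c ∈ SC.grading n), f c = (sec n ⟨c, hc⟩ : B) := by
    intro n c hc
    have h1 : SC.decomp.symm c = DirectSum.lof K ℕ (fun q => SC.grading q) n ⟨c, hc⟩ := by
      rw [LinearEquiv.symm_apply_eq]
      show c = DirectSum.coeLinearMap SC.grading
        ((DirectSum.lof K ℕ (fun q => ↥(SC.grading q)) n) ⟨c, hc⟩)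
      rw [DirectSum.lof_eq_of, DirectSum.coeLinearMap_of]
    simp only [hf, LinearMap.coe_comp, Function.comp_apply, LinearEquiv.coe_toLinearMap, h1,
      DirectSum.toModule_lof]
    rfl
  refine ⟨f, fun n c hc => ?_, ?_⟩
  · rw [hhom n c hc]; exact (sec n ⟨c, hc⟩).2
  · ext c
    obtain ⟨s, hs0, hssum⟩ := SC.exists_finset_sum_proj c
    have hq : ∀ q, π (f (SC.proj q c)) = SC.proj q c := by
      intro q
      rw [hhom q _ (SC.proj_mem q c), hsec q ⟨_, SC.proj_mem q c⟩]
    simp only [LinearMap.coe_comp, Function.comp_apply, LinearMap.id_coe, id_eq]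
    conv_rhs => rw [← hssum]
    conv_lhs => rw [← hssum]
    rw [map_sum, map_sum]
    exact Finset.sum_congr rfl fun q _ => hq q

end Graded

end AuxSES

section AuxAug

variable {K : Type*} [Field K]
variable {A B C A' B' C' : Type*} [AddCommGroup A] [Module K A] [AddCommGroup B] [Module K B]
  [AddCommGroup C] [Module K C] [AddCommGroup A'] [Module K A'] [AddCommGroup B'] [Module K B']
  [AddCommGroup C'] [Module K C']

variable {SA : HopfStr K A} {SB : HopfStr K B} {SC : HopfStr K C}
  {SA' : HopfStr K A'} {SB' : HopfStr K B'} {SC' : HopfStr K C'}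
  {i : A →ₗ[K] B} {π : B →ₗ[K] C}

lemma augPow_mul_mem : ∀ n : ℕ, ∀ a ∈ augPow SA n, ∀ a' : A, SA.mul a a' ∈ augPow SA n := by
  intro n
  induction n with
  | zero => intro a _ a'; exact Submodule.mem_top
  | succ n ih =>
    intro a ha a'
    induction ha using Submodule.span_induction with
    | mem x hx =>
      obtain ⟨a₁, ha₁, b, hb, rfl⟩ := hx
      rw [SA.mul_assoc']
      exact Submodule.subset_span ⟨a₁, ha₁, SA.mul b a', ih b hb a', rfl⟩
    | zero => simp only [map_zero, LinearMap.zero_apply]; exact Submodule.zero_mem _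
    | add x y _ _ hx hy =>
      rw [map_add, LinearMap.add_apply]; exact Submodule.add_mem _ hx hy
    | smul r x _ hx =>
      rw [map_smul, LinearMap.smul_apply]; exact Submodule.smul_mem _ r hx

lemma augPow_succ_le : ∀ n : ℕ, augPow SA (n + 1) ≤ augPow SA n := by
  intro n
  induction n with
  | zero => exact le_top
  | succ n ih =>
    refine Submodule.span_le.2 ?_
    rintro x ⟨a, ha, b, hb, rfl⟩
    exact Submodule.subset_span ⟨a, ha, b, ih hb, rfl⟩

lemma augPowSmul_succ_le (n : ℕ) :
    augPowSmul SA SB i (n + 1) ≤ augPowSmul SA SB i n := by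
  refine Submodule.span_le.2 ?_
  rintro x ⟨a, ha, b, rfl⟩
  exact Submodule.subset_span ⟨a, augPow_succ_le n ha, b, rfl⟩

lemma mul_ker_pi_mem (hses : IsHopfSES SA SB SC i π) {n : ℕ} {a : A}
    (ha : a ∈ augPow SA n) {z : B} (hz : z ∈ LinearMap.ker π) :
    SB.mul (i a) z ∈ augPowSmul SA SB i (n + 1) := by
  rw [hses.2.2.2.2.2] at hz
  induction hz using Submodule.span_induction with
  | mem x hx =>
    obtain ⟨a', ha', b, rfl⟩ := hx
    rw [← SB.mul_assoc', ← hses.1.map_mul]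
    refine Submodule.subset_span ⟨SA.mul a a', ?_, b, rfl⟩
    rw [SA.mul_comm']
    exact Submodule.subset_span ⟨a', ha', a, ha, rfl⟩
  | zero => rw [map_zero]; exact Submodule.zero_mem _
  | add x y _ _ hx hy => rw [map_add]; exact Submodule.add_mem _ hx hy
  | smul r x _ hx => rw [map_smul]; exact Submodule.smul_mem _ r hx

lemma augPow_map {αA : A →ₗ[K] A'} (hαA : IsHopfHom SA SA' αA) :
    ∀ n : ℕ, ∀ a ∈ augPow SA n, αA a ∈ augPow SA' n := by
  intro n
  induction n with
  | zero => intro a _; exact Submodule.mem_top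
  | succ n ih =>
    intro a ha
    induction ha using Submodule.span_induction with
    | mem x hx =>
      obtain ⟨a₁, ha₁, b, hb, rfl⟩ := hx
      rw [hαA.map_mul]
      refine Submodule.subset_span ⟨αA a₁, ?_, αA b, ih b hb, rfl⟩
      have := congrArg (fun g => g a₁) hαA.map_counit
      simpa [LinearMap.mem_ker.mp ha₁] using this
    | zero => rw [map_zero]; exact Submodule.zero_mem _
    | add x y _ _ hx hy => rw [map_add]; exact Submodule.add_mem _ hx hy
    | smul r x _ hx => rw [map_smul]; exact Submodule.smul_mem _ r hx

end AuxAug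

section AuxPhi

variable {K : Type*} [Field K]
variable {A B C : Type*} [AddCommGroup A] [Module K A] [AddCommGroup B] [Module K B]
  [AddCommGroup C] [Module K C]

variable (SB : HopfStr K B)

/-- The map `a ⊗ c ↦ i(a)·f(c)`. -/
noncomputable def phiMap (i : A →ₗ[K] B) (f : C →ₗ[K] B) : A ⊗[K] C →ₗ[K] B :=
  TensorProduct.lift ((SB.mul ∘ₗ i).compl₂ f)

/-- The comodule structure map `(id ⊗ π) ∘ Δ`. -/
noncomputable def omegaMap (π : B →ₗ[K] C) : B →ₗ[K] B ⊗[K] C :=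
  (TensorProduct.map LinearMap.id π) ∘ₗ SB.comul

variable {SB}

@[simp] lemma phiMap_tmul (i : A →ₗ[K] B) (f : C →ₗ[K] B) (a : A) (c : C) :
    phiMap SB i f (a ⊗ₜ[K] c) = SB.mul (i a) (f c) := rfl

lemma omegaMap_apply (π : B →ₗ[K] C) (b : B) :
    omegaMap SB π b = (TensorProduct.map LinearMap.id π) (SB.comul b) := rfl

variable {SA : HopfStr K A} {SC : HopfStr K C} {i : A →ₗ[K] B} {π : B →ₗ[K] C}

/-- Key computation: `ω(i(a)·y) = (i(a)·- ⊗ id)(ω y)`. -/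
lemma omegaMap_mul (hses : IsHopfSES SA SB SC i π) (a : A) (y : B) :
    omegaMap SB π (SB.mul (i a) y)
      = TensorProduct.map (SB.mul (i a)) LinearMap.id (omegaMap SB π y) := by
  have hπmul : ∀ v : A, ∀ b : B, π (SB.mul (i v) b) = SA.counit v • π b :=
    fun v b => pi_mul_i hses v b
  have key : ∀ t : A ⊗[K] A,
      (TensorProduct.map LinearMap.id π)
        ((TensorProduct.homTensorHomMap (RingHom.id K) B B B B
          ((TensorProduct.map SB.mul SB.mul) ((TensorProduct.map i i) t))) (SB.comul y))
      = TensorProduct.map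
          (SB.mul (i ((TensorProduct.rid K A) ((TensorProduct.map LinearMap.id SA.counit) t))))
          LinearMap.id (omegaMap SB π y) := by
    intro t
    induction t using TensorProduct.induction_on with
    | zero => simp
    | add s t hs ht =>
      simp only [map_add, LinearMap.add_apply, hs, ht, TensorProduct.map_add_left]
    | tmul u v =>
      rw [TensorProduct.map_tmul, TensorProduct.map_tmul, TensorProduct.homTensorHomMap_apply]
      have h1 : (TensorProduct.map LinearMap.id π) ∘ₗ
            (TensorProduct.map (SB.mul (i u)) (SB.mul (i v)))
          = TensorProduct.map (SB.mul (i u)) (π ∘ₗ SB.mul (i v)) := by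
        rw [← TensorProduct.map_comp]; rfl
      have h2 : π ∘ₗ SB.mul (i v) = SA.counit v • π := by
        ext b; simpa using hπmul v b
      have h3 : (TensorProduct.map LinearMap.id π)
            ((TensorProduct.map (SB.mul (i u)) (SB.mul (i v))) (SB.comul y))
          = SA.counit v • TensorProduct.map (SB.mul (i u)) LinearMap.id (omegaMap SB π y) := by
        rw [← LinearMap.comp_apply, h1, h2, TensorProduct.map_smul_right, LinearMap.smul_apply]
        congr 1
        have : TensorProduct.map (SB.mul (i u)) π
            = TensorProduct.map (SB.mul (i u)) LinearMap.id ∘ₗ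
              TensorProduct.map LinearMap.id π := by
          rw [← TensorProduct.map_comp]; rfl
        rw [this]; rfl
      rw [h3]
      have h4 : (TensorProduct.rid K A)
          ((TensorProduct.map LinearMap.id SA.counit) (u ⊗ₜ[K] v)) = SA.counit v • u := by
        simp
      rw [h4, map_smul, map_smul, TensorProduct.map_smul_left, LinearMap.smul_apply]
  have h5 : SB.comul (i a) = (TensorProduct.map i i) (SA.comul a) := by
    have := congrArg (fun g => g a) hses.1.map_comul
    simpa using this
  rw [omegaMap_apply, SB.comul_mul, h5, key, SA.comul_counit_apply]

end AuxPhi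

section AuxInj

variable {K : Type*} [Field K]
variable {A B C : Type*} [AddCommGroup A] [Module K A] [AddCommGroup B] [Module K B]
  [AddCommGroup C] [Module K C]

lemma tensor_map_comm (m : B →ₗ[K] B) (P : C →ₗ[K] C) (t : B ⊗[K] C) :
    (TensorProduct.map LinearMap.id P) ((TensorProduct.map m LinearMap.id) t)
      = (TensorProduct.map m LinearMap.id) ((TensorProduct.map LinearMap.id P) t) := by
  induction t using TensorProduct.induction_on with
  | zero => simp
  | tmul b c => simp
  | add s t hs ht => simp [map_add, hs, ht]

variable (SB : HopfStr K B)

/-- `b ⊗ c ↦ ε(b) • c`. -/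
noncomputable def epsCMap : B ⊗[K] C →ₗ[K] C :=
  (TensorProduct.lid K C).toLinearMap ∘ₗ (TensorProduct.map SB.counit LinearMap.id)

variable {SB}

@[simp] lemma epsCMap_tmul (b : B) (c : C) :
    epsCMap SB (b ⊗ₜ[K] c) = SB.counit b • c := by
  simp [epsCMap]

variable {SA : GradedHopfStr K A} {SB : GradedHopfStr K B} {SC : GradedHopfStr K C}
  {i : A →ₗ[K] B} {π : B →ₗ[K] C} {f : C →ₗ[K] B}

lemma epsCMap_proj (q : ℕ) (t : B ⊗[K] C) :
    epsCMap SB.toHopfStr ((TensorProduct.map LinearMap.id (SC.proj q)) t)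
      = SC.proj q (epsCMap SB.toHopfStr t) := by
  induction t using TensorProduct.induction_on with
  | zero => simp
  | tmul b c => simp [map_smul]
  | add s t hs ht => simp [map_add, hs, ht]

lemma epsCMap_map_pi (t : B ⊗[K] B) :
    epsCMap SB.toHopfStr ((TensorProduct.map LinearMap.id π) t)
      = π ((TensorProduct.lid K B) ((TensorProduct.map SB.counit LinearMap.id) t)) := by
  induction t using TensorProduct.induction_on with
  | zero => simp
  | tmul b b' => simp [map_smul]
  | add s t hs ht => simp [map_add, hs, ht]

lemma epsCMap_omega (b : B) :
    epsCMap SB.toHopfStr (omegaMap SB.toHopfStr π b) = π b := by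
  rw [omegaMap_apply, epsCMap_map_pi, SB.counit_comul_apply]

section NL

variable (hπ : ∀ n : ℕ, ∀ b ∈ SB.grading n, π b ∈ SC.grading n)
variable (hf : ∀ n : ℕ, ∀ c ∈ SC.grading n, f c ∈ SB.grading n)
variable (hfsplit : π.comp f = LinearMap.id)

include hπ hf in
lemma omega_f_proj_gt {q k : ℕ} (hk : q < k) {c : C} (hc : c ∈ SC.grading q) :
    (TensorProduct.map LinearMap.id (SC.proj k)) (omegaMap SB.toHopfStr π (f c)) = 0 := by
  have hmem := SB.comul_graded q (f c) (hf q c hc)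
  rw [omegaMap_apply]
  refine Submodule.iSup_induction _ (motive := fun t =>
    (TensorProduct.map LinearMap.id (SC.proj k))
      ((TensorProduct.map LinearMap.id π) t) = 0) hmem ?_ (by simp) ?_
  · rintro ⟨⟨p, r⟩, hpr⟩ t ⟨u, rfl⟩
    induction u using TensorProduct.induction_on with
    | zero => simp
    | tmul b b' =>
      simp only [TensorProduct.map_tmul, LinearMap.id_coe, id_eq, Submodule.coe_subtype]
      rw [SC.proj_of_mem_ne (hπ r _ b'.2) (by omega : r ≠ k), TensorProduct.tmul_zero]
    | add s t hs ht => rw [map_add, map_add, map_add, hs, ht, add_zero]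
  · intro s t hs ht
    rw [map_add, map_add, hs, ht, add_zero]

include hπ hf hfsplit in
lemma omega_f_proj_eq (hB : SB.Connected) {q : ℕ} {c : C} (hc : c ∈ SC.grading q) :
    (TensorProduct.map LinearMap.id (SC.proj q)) (omegaMap SB.toHopfStr π (f c))
      = SB.one ⊗ₜ[K] c := by
  have hmem := SB.comul_graded q (f c) (hf q c hc)
  set u := (TensorProduct.map LinearMap.id (SC.proj q)) (omegaMap SB.toHopfStr π (f c)) with hu
  have hrange : u ∈ LinearMap.range
      (TensorProduct.map (SB.grading 0).subtype (LinearMap.id : C →ₗ[K] C)) := by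
    rw [hu, omegaMap_apply]
    refine Submodule.iSup_induction _ (motive := fun t =>
      (TensorProduct.map LinearMap.id (SC.proj q))
        ((TensorProduct.map LinearMap.id π) t) ∈ LinearMap.range
          (TensorProduct.map (SB.grading 0).subtype (LinearMap.id : C →ₗ[K] C)))
      hmem ?_ (by simp) ?_
    · rintro ⟨⟨p, r⟩, hpr⟩ t ⟨w, rfl⟩
      induction w using TensorProduct.induction_on with
      | zero => simp
      | tmul b b' =>
        simp only [TensorProduct.map_tmul, LinearMap.id_coe, id_eq, Submodule.coe_subtype]
        by_cases hr : r = q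
        · subst hr
          have hp : p = 0 := by omega
          have hb0 : (b : B) ∈ SB.grading 0 := by rw [← hp]; exact b.2
          rw [SC.proj_of_mem (hπ r _ b'.2)]
          exact ⟨⟨b.1, hb0⟩ ⊗ₜ[K] π b'.1, by simp⟩
        · rw [SC.proj_of_mem_ne (hπ r _ b'.2) hr, TensorProduct.tmul_zero]
          exact Submodule.zero_mem _
      | add s t hs ht =>
        rw [map_add, map_add, map_add]
        exact Submodule.add_mem _ hs ht
    · intro s t hs ht
      rw [map_add, map_add]
      exact Submodule.add_mem _ hs ht
  obtain ⟨w, hw⟩ := hrange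
  have hB' : SB.grading 0 = Submodule.span K {SB.one} := hB
  have hex : ∀ w' : (SB.grading 0) ⊗[K] C, ∃ d : C,
      (TensorProduct.map (SB.grading 0).subtype (LinearMap.id : C →ₗ[K] C)) w'
        = SB.one ⊗ₜ[K] d := by
    intro w'
    induction w' using TensorProduct.induction_on with
    | zero => exact ⟨0, by rw [TensorProduct.tmul_zero, map_zero]⟩
    | tmul b x =>
      have hbmem : (b : B) ∈ Submodule.span K {SB.one} := by rw [← hB']; exact b.2
      obtain ⟨r, hr⟩ := Submodule.mem_span_singleton.mp hbmem
      refine ⟨r • x, ?_⟩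
      rw [TensorProduct.map_tmul, ← TensorProduct.smul_tmul]
      show (b : B) ⊗ₜ[K] x = (r • SB.one) ⊗ₜ[K] x
      rw [hr]
    | add s t hs ht =>
      obtain ⟨d1, hd1⟩ := hs
      obtain ⟨d2, hd2⟩ := ht
      exact ⟨d1 + d2, by rw [map_add, hd1, hd2, TensorProduct.tmul_add]⟩
  obtain ⟨d, hd⟩ := hex w
  rw [hw] at hd
  have hπf : π (f c) = c := congrArg (fun g => g c) hfsplit
  have h1 : epsCMap SB.toHopfStr u = c := by
    rw [hu, epsCMap_proj, epsCMap_omega, hπf, SC.proj_of_mem hc]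
  have h2 : epsCMap SB.toHopfStr u = d := by
    rw [hd, epsCMap_tmul, SB.counit_one, one_smul]
  rw [hd, ← h2, h1]

end NL

section Inj

variable {hses : IsHopfSES SA.toHopfStr SB.toHopfStr SC.toHopfStr i π}

lemma L_gt (hses : IsHopfSES SA.toHopfStr SB.toHopfStr SC.toHopfStr i π)
    (hπ : ∀ n : ℕ, ∀ b ∈ SB.grading n, π b ∈ SC.grading n)
    (hf : ∀ n : ℕ, ∀ c ∈ SC.grading n, f c ∈ SB.grading n)
    {q k : ℕ} (hk : q < k) :
    (TensorProduct.map LinearMap.id (SC.proj k)) ∘ₗ omegaMap SB.toHopfStr π ∘ₗ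
      phiMap SB.toHopfStr i f ∘ₗ
      (TensorProduct.map LinearMap.id (SC.grading q).subtype) = 0 := by
  apply TensorProduct.ext'
  rintro a ⟨c, hc⟩
  simp only [LinearMap.comp_apply, TensorProduct.map_tmul, LinearMap.id_coe, id_eq,
    Submodule.coe_subtype, phiMap_tmul, LinearMap.zero_apply]
  rw [omegaMap_mul hses, tensor_map_comm, omega_f_proj_gt hπ hf hk hc, map_zero]

lemma L_eq (hses : IsHopfSES SA.toHopfStr SB.toHopfStr SC.toHopfStr i π)
    (hB : SB.Connected)
    (hπ : ∀ n : ℕ, ∀ b ∈ SB.grading n, π b ∈ SC.grading n)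
    (hf : ∀ n : ℕ, ∀ c ∈ SC.grading n, f c ∈ SB.grading n)
    (hfsplit : π.comp f = LinearMap.id) (q : ℕ) :
    (TensorProduct.map LinearMap.id (SC.proj q)) ∘ₗ omegaMap SB.toHopfStr π ∘ₗ
      phiMap SB.toHopfStr i f ∘ₗ
      (TensorProduct.map LinearMap.id (SC.grading q).subtype)
      = TensorProduct.map i (SC.grading q).subtype := by
  apply TensorProduct.ext'
  rintro a ⟨c, hc⟩
  simp only [LinearMap.comp_apply, TensorProduct.map_tmul, LinearMap.id_coe, id_eq,
    Submodule.coe_subtype, phiMap_tmul]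
  rw [omegaMap_mul hses, tensor_map_comm, omega_f_proj_eq hπ hf hfsplit hB hc,
    TensorProduct.map_tmul, SB.mul_one'']
  rfl

/-- Decomposition of a tensor along the grading of `C`. -/
lemma exists_finset_sum_proj_tensor (x : A ⊗[K] C) :
    ∃ s : Finset ℕ, (∀ q ∉ s, (TensorProduct.map LinearMap.id (SC.proj q)) x = 0)
      ∧ ∑ q ∈ s, (TensorProduct.map (LinearMap.id : A →ₗ[K] A) (SC.proj q)) x = x := by
  induction x using TensorProduct.induction_on with
  | zero => exact ⟨∅, fun q _ => by simp, by simp⟩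
  | tmul a c =>
    obtain ⟨s, hs0, hssum⟩ := SC.exists_finset_sum_proj c
    refine ⟨s, fun q hq => ?_, ?_⟩
    · rw [TensorProduct.map_tmul, hs0 q hq, TensorProduct.tmul_zero]
    · simp only [TensorProduct.map_tmul, LinearMap.id_coe, id_eq]
      rw [← TensorProduct.tmul_sum, hssum]
  | add x y hx hy =>
    obtain ⟨sx, hx0, hxsum⟩ := hx
    obtain ⟨sy, hy0, hysum⟩ := hy
    refine ⟨sx ∪ sy, fun q hq => ?_, ?_⟩
    · rw [map_add, hx0 q (fun h => hq (Finset.mem_union_left _ h)),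
        hy0 q (fun h => hq (Finset.mem_union_right _ h)), add_zero]
    · have h1 : ∑ q ∈ sx ∪ sy, (TensorProduct.map (LinearMap.id : A →ₗ[K] A) (SC.proj q)) x
          = ∑ q ∈ sx, (TensorProduct.map (LinearMap.id : A →ₗ[K] A) (SC.proj q)) x :=
        (Finset.sum_subset Finset.subset_union_left (fun q _ hq => hx0 q hq)).symm
      have h2 : ∑ q ∈ sx ∪ sy, (TensorProduct.map (LinearMap.id : A →ₗ[K] A) (SC.proj q)) y
          = ∑ q ∈ sy, (TensorProduct.map (LinearMap.id : A →ₗ[K] A) (SC.proj q)) y :=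
        (Finset.sum_subset Finset.subset_union_right (fun q _ hq => hy0 q hq)).symm
      simp only [map_add, Finset.sum_add_distrib, h1, h2, hxsum, hysum]

lemma proj_tensor_mem_range (q : ℕ) (x : A ⊗[K] C) :
    (TensorProduct.map (LinearMap.id : A →ₗ[K] A) (SC.proj q)) x
      ∈ LinearMap.range (TensorProduct.map (LinearMap.id : A →ₗ[K] A)
          (SC.grading q).subtype) := by
  have : SC.proj q = (SC.grading q).subtype ∘ₗ
      ((DirectSum.component K ℕ _ q) ∘ₗ SC.decomp.symm.toLinearMap) := rfl
  rw [this, ← LinearMap.comp_id (LinearMap.id : A →ₗ[K] A), TensorProduct.map_comp]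
  exact ⟨_, rfl⟩

lemma map_i_subtype_injective (hinj : Function.Injective i) (q : ℕ) :
    Function.Injective (TensorProduct.map i (SC.grading q).subtype) := by
  have h1 : TensorProduct.map i (SC.grading q).subtype
      = (TensorProduct.map i (LinearMap.id : C →ₗ[K] C)) ∘ₗ
        (TensorProduct.map (LinearMap.id : A →ₗ[K] A) (SC.grading q).subtype) := by
    rw [← TensorProduct.map_comp, LinearMap.comp_id, LinearMap.id_comp]
  have h2 : Function.Injective (TensorProduct.map i (LinearMap.id : C →ₗ[K] C)) :=
    Module.Flat.rTensor_preserves_injective_linearMap i hinj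
  have h3 : Function.Injective
      (TensorProduct.map (LinearMap.id : A →ₗ[K] A) (SC.grading q).subtype) :=
    Module.Flat.lTensor_preserves_injective_linearMap _ (Submodule.injective_subtype _)
  rw [h1, LinearMap.coe_comp]
  exact h2.comp h3

theorem phiMap_injective (hses : IsHopfSES SA.toHopfStr SB.toHopfStr SC.toHopfStr i π)
    (hB : SB.Connected)
    (hπ : ∀ n : ℕ, ∀ b ∈ SB.grading n, π b ∈ SC.grading n)
    (hf : ∀ n : ℕ, ∀ c ∈ SC.grading n, f c ∈ SB.grading n)
    (hfsplit : π.comp f = LinearMap.id) :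
    Function.Injective (phiMap SB.toHopfStr i f) := by
  rw [← LinearMap.ker_eq_bot, LinearMap.ker_eq_bot']
  intro x hx
  by_contra hx0
  obtain ⟨s, hs0, hssum⟩ := exists_finset_sum_proj_tensor x
  classical
  set s₀ : Finset ℕ := s.filter
    (fun q => (TensorProduct.map (LinearMap.id : A →ₗ[K] A) (SC.proj q)) x ≠ 0) with hs₀
  have hs₀ne : s₀.Nonempty := by
    by_contra hne
    apply hx0
    rw [← hssum]
    refine Finset.sum_eq_zero fun q hq => ?_
    by_contra hQ
    exact hne ⟨q, Finset.mem_filter.mpr ⟨hq, hQ⟩⟩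
  set k := s₀.max' hs₀ne with hk
  have hsum₀ : ∑ q ∈ s₀, (TensorProduct.map (LinearMap.id : A →ₗ[K] A) (SC.proj q)) x = x := by
    conv_rhs => rw [← hssum]
    refine Finset.sum_subset (Finset.filter_subset _ _) fun q hq hq' => ?_
    by_contra hQ
    exact hq' (Finset.mem_filter.mpr ⟨hq, hQ⟩)
  -- choose witnesses
  have hwitness : ∀ q ∈ s₀, ∃ w, (TensorProduct.map (LinearMap.id : A →ₗ[K] A)
      (SC.grading q).subtype) w
      = (TensorProduct.map (LinearMap.id : A →ₗ[K] A) (SC.proj q)) x :=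
    fun q _ => (proj_tensor_mem_range q x).imp fun w hw => hw
  have hzero : (TensorProduct.map LinearMap.id (SC.proj k))
      (omegaMap SB.toHopfStr π (phiMap SB.toHopfStr i f x)) = 0 := by
    rw [hx, map_zero, map_zero]
  rw [← hsum₀] at hzero
  simp only [map_sum] at hzero
  obtain ⟨wk, hwk⟩ := hwitness k (s₀.max'_mem hs₀ne)
  have hterm : ∀ q ∈ s₀, (TensorProduct.map LinearMap.id (SC.proj k))
      (omegaMap SB.toHopfStr π (phiMap SB.toHopfStr i f
        ((TensorProduct.map (LinearMap.id : A →ₗ[K] A) (SC.proj q)) x)))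
      = if q = k then (TensorProduct.map i (SC.grading k).subtype) wk else 0 := by
    intro q hq
    obtain ⟨w, hw⟩ := hwitness q hq
    by_cases hqk : q = k
    · subst hqk
      rw [if_pos rfl, ← hwk]
      have := congrArg (fun g => g wk) (L_eq hses hB hπ hf hfsplit k)
      simpa using this
    · have hqlt : q < k := lt_of_le_of_ne (s₀.le_max' q hq) hqk
      rw [if_neg hqk, ← hw]
      have := congrArg (fun g => g w) (L_gt hses hπ hf hqlt)
      simpa using this
  rw [Finset.sum_congr rfl hterm, Finset.sum_ite_eq' s₀ k
    (fun _ => (TensorProduct.map i (SC.grading k).subtype) wk),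
    if_pos (s₀.max'_mem hs₀ne)] at hzero
  have hwk0 : wk = 0 := map_i_subtype_injective hses.2.2.1 k (by rw [hzero, map_zero])
  have : (TensorProduct.map (LinearMap.id : A →ₗ[K] A) (SC.proj k)) x = 0 := by
    rw [← hwk, hwk0, map_zero]
  exact (Finset.mem_filter.mp (s₀.max'_mem hs₀ne)).2 this

end Inj

end AuxInj

section AuxSurj

variable {K : Type*} [Field K]
variable {A B C : Type*} [AddCommGroup A] [Module K A] [AddCommGroup B] [Module K B]
  [AddCommGroup C] [Module K C]
variable {SA : GradedHopfStr K A} {SB : GradedHopfStr K B} {SC : GradedHopfStr K C}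
  {i : A →ₗ[K] B} {π : B →ₗ[K] C} {f : C →ₗ[K] B}

/-- Homogeneous generators of degree `n` for `ker π`. -/
def hSet (SA : GradedHopfStr K A) (SB : GradedHopfStr K B) (i : A →ₗ[K] B) (n : ℕ) : Set B :=
  {y : B | ∃ p q : ℕ, p + q = n ∧ 0 < p ∧ ∃ a : A, a ∈ LinearMap.ker SA.counit ∧
    a ∈ SA.grading p ∧ ∃ b ∈ SB.grading q, y = SB.mul (i a) b}

lemma mul_i_phi_mem_range (hses : IsHopfSES SA.toHopfStr SB.toHopfStr SC.toHopfStr i π)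
    (a : A) (x : A ⊗[K] C) :
    SB.mul (i a) (phiMap SB.toHopfStr i f x)
      ∈ LinearMap.range (phiMap SB.toHopfStr i f) := by
  induction x using TensorProduct.induction_on with
  | zero => rw [map_zero, map_zero]; exact Submodule.zero_mem _
  | tmul a' c =>
    refine ⟨(SA.mul a a') ⊗ₜ[K] c, ?_⟩
    rw [phiMap_tmul, phiMap_tmul, hses.1.map_mul, SB.mul_assoc']
  | add x y hx hy =>
    rw [map_add, map_add]
    exact Submodule.add_mem _ hx hy

lemma ker_pi_proj (hses : IsHopfSES SA.toHopfStr SB.toHopfStr SC.toHopfStr i π)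
    (hA : SA.Connected) (hi : ∀ n : ℕ, ∀ a ∈ SA.grading n, i a ∈ SB.grading n)
    {z : B} (hz : z ∈ LinearMap.ker π) (n : ℕ) :
    SB.proj n z ∈ Submodule.span K (hSet SA SB i n) := by
  have hA' : SA.grading 0 = Submodule.span K {SA.one} := hA
  have key : LinearMap.ker π
      ≤ ⨅ m : ℕ, (Submodule.span K (hSet SA SB i m)).comap (SB.proj m) := by
    rw [hses.2.2.2.2.2, Submodule.span_le]
    rintro y ⟨a, ha, b, rfl⟩
    rw [SetLike.mem_coe, Submodule.mem_iInf]
    intro m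
    rw [Submodule.mem_comap]
    obtain ⟨sa, ha0, hasum⟩ := SA.exists_finset_sum_proj a
    obtain ⟨sb, hb0, hbsum⟩ := SB.exists_finset_sum_proj b
    have hproj0 : SA.proj 0 a = 0 := by
      by_cases h0 : 0 ∈ sa
      · have hsum : SA.counit a = ∑ p ∈ sa, SA.counit (SA.proj p a) := by
          conv_lhs => rw [← hasum]
          rw [map_sum]
        rw [Finset.sum_eq_single_of_mem 0 h0
          (fun p _ hp => SA.counit_graded p (Nat.pos_of_ne_zero hp) _ (SA.proj_mem p a))] at hsum
        have hε0 : SA.counit (SA.proj 0 a) = 0 := by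
          rw [← hsum]; exact LinearMap.mem_ker.mp ha
        have hmem0 : SA.proj 0 a ∈ Submodule.span K {SA.one} := by
          rw [← hA']; exact SA.proj_mem 0 a
        obtain ⟨r, hr⟩ := Submodule.mem_span_singleton.mp hmem0
        have hrr : r = 0 := by
          rw [← hr] at hε0
          rw [map_smul, SA.counit_one, smul_eq_mul, mul_one] at hε0
          exact hε0
        rw [← hr, hrr, zero_smul]
      · exact ha0 0 h0
    have hcompKer : ∀ p : ℕ, SA.proj p a ∈ LinearMap.ker SA.counit := by
      intro p
      rcases Nat.eq_zero_or_pos p with hp | hp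
      · subst hp; rw [hproj0]; exact Submodule.zero_mem _
      · exact LinearMap.mem_ker.mpr (SA.counit_graded p hp _ (SA.proj_mem p a))
    have hdecomp : SB.mul (i a) b
        = ∑ p ∈ sa, ∑ q ∈ sb, SB.mul (i (SA.proj p a)) (SB.proj q b) := by
      conv_lhs => rw [← hasum, ← hbsum]
      rw [map_sum, map_sum]
      conv_rhs => rw [Finset.sum_comm]
      refine Finset.sum_congr rfl fun q _ => ?_
      rw [map_sum, LinearMap.sum_apply]
    rw [hdecomp, map_sum]
    refine Submodule.sum_mem _ fun p _ => ?_
    rw [map_sum]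
    refine Submodule.sum_mem _ fun q _ => ?_
    by_cases hp0 : p = 0
    · subst hp0
      rw [hproj0, map_zero, map_zero, LinearMap.zero_apply, map_zero]
      exact Submodule.zero_mem _
    · have hterm : SB.mul (i (SA.proj p a)) (SB.proj q b) ∈ SB.grading (p + q) :=
        SB.mul_graded p q _ (hi p _ (SA.proj_mem p a)) _ (SB.proj_mem q b)
      by_cases hpq : p + q = m
      · rw [SB.proj_of_mem (hpq ▸ hterm)]
        exact Submodule.subset_span ⟨p, q, hpq, Nat.pos_of_ne_zero hp0, SA.proj p a,
          hcompKer p, SA.proj_mem p a, SB.proj q b, SB.proj_mem q b, rfl⟩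
      · rw [SB.proj_of_mem_ne hterm hpq]
        exact Submodule.zero_mem _
  exact Submodule.mem_comap.mp (Submodule.mem_iInf _ |>.mp (key hz) n)

theorem phiMap_surjective (hses : IsHopfSES SA.toHopfStr SB.toHopfStr SC.toHopfStr i π)
    (hA : SA.Connected)
    (hi : ∀ n : ℕ, ∀ a ∈ SA.grading n, i a ∈ SB.grading n)
    (hπ : ∀ n : ℕ, ∀ b ∈ SB.grading n, π b ∈ SC.grading n)
    (hf : ∀ n : ℕ, ∀ c ∈ SC.grading n, f c ∈ SB.grading n)
    (hfsplit : π.comp f = LinearMap.id) :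
    Function.Surjective (phiMap SB.toHopfStr i f) := by
  have hrange : ∀ n : ℕ, ∀ b ∈ SB.grading n,
      b ∈ LinearMap.range (phiMap SB.toHopfStr i f) := by
    intro n
    induction n using Nat.strong_induction_on with
    | _ n ih =>
      intro b hb
      have hπf : ∀ c : C, π (f c) = c := fun c => congrArg (fun g => g c) hfsplit
      have hz : b - f (π b) ∈ LinearMap.ker π := by
        rw [LinearMap.mem_ker, map_sub, hπf, sub_self]
      have hzdeg : b - f (π b) ∈ SB.grading n :=
        Submodule.sub_mem _ hb (hf n _ (hπ n b hb))
      have h1 : b - f (π b) ∈ Submodule.span K (hSet SA SB i n) := by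
        rw [← SB.proj_of_mem hzdeg]
        exact ker_pi_proj hses hA hi hz n
      have h2 : Submodule.span K (hSet SA SB i n)
          ≤ LinearMap.range (phiMap SB.toHopfStr i f) := by
        rw [Submodule.span_le]
        rintro y ⟨p, q, hpq, hp, a, haker, hagr, b', hb', rfl⟩
        have hq : q < n := by omega
        obtain ⟨x, hx⟩ := ih q hq b' hb'
        rw [← hx]
        exact mul_i_phi_mem_range hses a x
      have hfmem : f (π b) ∈ LinearMap.range (phiMap SB.toHopfStr i f) :=
        ⟨SA.one ⊗ₜ[K] π b, by rw [phiMap_tmul, hses.1.map_one, SB.one_mul']⟩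
      have hb' : b = f (π b) + (b - f (π b)) := by abel
      rw [hb']
      exact Submodule.add_mem _ hfmem (h2 h1)
  intro b
  have : b ∈ LinearMap.range (phiMap SB.toHopfStr i f) := by
    obtain ⟨s, hs0, hssum⟩ := SB.exists_finset_sum_proj b
    rw [← hssum]
    exact Submodule.sum_mem _ fun q _ => hrange q _ (SB.proj_mem q b)
  exact this

end AuxSurj

section AuxQuot

variable {K : Type*} [Field K]
variable {A B C : Type*} [AddCommGroup A] [Module K A] [AddCommGroup B] [Module K B]
  [AddCommGroup C] [Module K C]

lemma quotKerEquivOfSurjective_apply_mk (f : A →ₗ[K] B) (hf : Function.Surjective f) (x : A) :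
    f.quotKerEquivOfSurjective hf (Submodule.Quotient.mk x) = f x := by
  simp [LinearMap.quotKerEquivOfSurjective, LinearMap.quotKerEquivRange_apply_mk]

variable {SA : GradedHopfStr K A} {SB : GradedHopfStr K B} {SC : GradedHopfStr K C}
  {i : A →ₗ[K] B} {π : B →ₗ[K] C} {f : C →ₗ[K] B}

lemma range_phi_aug (hses : IsHopfSES SA.toHopfStr SB.toHopfStr SC.toHopfStr i π)
    (hsurj : Function.Surjective (phiMap SB.toHopfStr i f)) (n : ℕ) :
    LinearMap.range ((phiMap SB.toHopfStr i f) ∘ₗ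
        LinearMap.rTensor C (augPow SA.toHopfStr n).subtype)
      = augPowSmul SA.toHopfStr SB.toHopfStr i n := by
  apply le_antisymm
  · rintro y ⟨t, rfl⟩
    induction t using TensorProduct.induction_on with
    | zero => rw [map_zero]; exact Submodule.zero_mem _
    | tmul a c =>
      simp only [LinearMap.comp_apply, LinearMap.rTensor_tmul, Submodule.coe_subtype,
        phiMap_tmul]
      exact Submodule.subset_span ⟨a.1, a.2, f c, rfl⟩
    | add s t hs ht => rw [map_add]; exact Submodule.add_mem _ hs ht
  · rw [augPowSmul]
    rw [Submodule.span_le]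
    rintro y ⟨a, ha, b, rfl⟩
    obtain ⟨x, rfl⟩ := hsurj b
    have key : ∀ x : A ⊗[K] C, SB.mul (i a) (phiMap SB.toHopfStr i f x)
        ∈ LinearMap.range ((phiMap SB.toHopfStr i f) ∘ₗ
          LinearMap.rTensor C (augPow SA.toHopfStr n).subtype) := by
      intro x
      induction x using TensorProduct.induction_on with
      | zero => rw [map_zero, map_zero]; exact Submodule.zero_mem _
      | tmul a' c =>
        refine ⟨(⟨SA.mul a a', augPow_mul_mem n a ha a'⟩ : augPow SA.toHopfStr n) ⊗ₜ[K] c, ?_⟩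
        simp only [LinearMap.comp_apply, LinearMap.rTensor_tmul, Submodule.coe_subtype,
          phiMap_tmul]
        rw [hses.1.map_mul, SB.mul_assoc']
      | add s t hs ht => rw [map_add, map_add]; exact Submodule.add_mem _ hs ht
    exact key x

lemma part2_iso (hses : IsHopfSES SA.toHopfStr SB.toHopfStr SC.toHopfStr i π)
    (hsurj : Function.Surjective (phiMap SB.toHopfStr i f))
    (hinj : Function.Injective (phiMap SB.toHopfStr i f)) (n : ℕ) :
    ∃ e : ((augPow SA.toHopfStr n ⧸
              (augPow SA.toHopfStr (n+1)).comap (augPow SA.toHopfStr n).subtype) ⊗[K] C)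
          ≃ₗ[K]
          (augPowSmul SA.toHopfStr SB.toHopfStr i n ⧸
              (augPowSmul SA.toHopfStr SB.toHopfStr i (n+1)).comap
                (augPowSmul SA.toHopfStr SB.toHopfStr i n).subtype),
      ∀ (a : A) (ha : a ∈ augPow SA.toHopfStr n) (c : C),
        e (Submodule.Quotient.mk (⟨a, ha⟩ : augPow SA.toHopfStr n) ⊗ₜ[K] c)
          = Submodule.Quotient.mk
              (⟨SB.mul (i a) (f c), Submodule.subset_span ⟨a, ha, f c, rfl⟩⟩ :
                augPowSmul SA.toHopfStr SB.toHopfStr i n) := by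
  classical
  set N := augPow SA.toHopfStr n with hN
  set N1 := augPow SA.toHopfStr (n+1) with hN1
  set NN1 : Submodule K N := N1.comap N.subtype with hNN1
  set M := augPowSmul SA.toHopfStr SB.toHopfStr i n with hM
  set M1 := augPowSmul SA.toHopfStr SB.toHopfStr i (n+1) with hM1
  set MM1 : Submodule K M := M1.comap M.subtype with hMM1
  set ψ : N ⊗[K] C →ₗ[K] B := (phiMap SB.toHopfStr i f) ∘ₗ LinearMap.rTensor C N.subtype
    with hψ
  have hψrange : LinearMap.range ψ = M := range_phi_aug hses hsurj n
  have hψmem : ∀ t, ψ t ∈ M := fun t => hψrange ▸ LinearMap.mem_range_self ψ t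
  set ψ' : N ⊗[K] C →ₗ[K] M := ψ.codRestrict M hψmem with hψ'
  set s₂ : N ⊗[K] C →ₗ[K] (M ⧸ MM1) := MM1.mkQ ∘ₗ ψ' with hs₂def
  have hψ'surj : Function.Surjective ψ' := by
    intro m
    have : (m : B) ∈ LinearMap.range ψ := hψrange.symm ▸ m.2
    obtain ⟨t, ht⟩ := this
    exact ⟨t, Subtype.ext ht⟩
  have hs₂ : Function.Surjective s₂ := (Submodule.mkQ_surjective MM1).comp hψ'surj
  set s₁ : N ⊗[K] C →ₗ[K] (N ⧸ NN1) ⊗[K] C := LinearMap.rTensor C NN1.mkQ with hs₁def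
  have hs₁ : Function.Surjective s₁ :=
    LinearMap.rTensor_surjective C (Submodule.mkQ_surjective NN1)
  have hker₁ : LinearMap.ker s₁ = LinearMap.range (LinearMap.rTensor C NN1.subtype) :=
    rTensor_mkQ C NN1
  have hker₂ : LinearMap.ker s₂ = LinearMap.range (LinearMap.rTensor C NN1.subtype) := by
    have hmemM1 : ∀ t, (t ∈ LinearMap.ker s₂ ↔ ψ t ∈ M1) := by
      intro t
      rw [hs₂def, LinearMap.mem_ker, LinearMap.comp_apply, Submodule.mkQ_apply,
        Submodule.Quotient.mk_eq_zero, hMM1, Submodule.mem_comap]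
      rfl
    apply le_antisymm
    · intro t ht
      have htM1 : ψ t ∈ M1 := (hmemM1 t).mp ht
      rw [hM1, ← range_phi_aug hses hsurj (n+1)] at htM1
      obtain ⟨u, hu⟩ := htM1
      have hle : N1 ≤ N := augPow_succ_le n
      have hfact : LinearMap.rTensor C N1.subtype
          = (LinearMap.rTensor C N.subtype) ∘ₗ
            (LinearMap.rTensor C (Submodule.inclusion hle)) := by
        rw [← LinearMap.rTensor_comp]
        congr 1
      have heq : LinearMap.rTensor C N.subtype t
          = LinearMap.rTensor C N.subtype
              ((LinearMap.rTensor C (Submodule.inclusion hle)) u) := by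
        have h1 : ψ t = ψ ((LinearMap.rTensor C (Submodule.inclusion hle)) u) := by
          rw [hψ, LinearMap.comp_apply, LinearMap.comp_apply, ← LinearMap.comp_apply
            (LinearMap.rTensor C N.subtype), ← hfact]
          exact hu.symm
        exact hinj h1
      have hrtinj : Function.Injective (LinearMap.rTensor C N.subtype) :=
        Module.Flat.rTensor_preserves_injective_linearMap _ (Submodule.injective_subtype N)
      have ht2 : t = (LinearMap.rTensor C (Submodule.inclusion hle)) u := hrtinj heq
      set κ : N1 →ₗ[K] NN1 :=
        (Submodule.inclusion hle).codRestrict NN1 (fun a => by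
          rw [hNN1, Submodule.mem_comap]
          exact a.2) with hκ
      have hfact2 : (Submodule.inclusion hle) = NN1.subtype ∘ₗ κ := rfl
      rw [ht2, hfact2, LinearMap.rTensor_comp]
      exact ⟨(LinearMap.rTensor C κ) u, rfl⟩
    · rintro t ⟨u, rfl⟩
      refine (hmemM1 _).mpr ?_
      induction u using TensorProduct.induction_on with
      | zero => rw [map_zero, map_zero]; exact Submodule.zero_mem _
      | tmul a c =>
        have haN1 : ((a : N) : A) ∈ N1 := a.2
        simp only [hψ, LinearMap.comp_apply, LinearMap.rTensor_tmul, Submodule.coe_subtype,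
          phiMap_tmul]
        exact Submodule.subset_span ⟨((a : N) : A), haN1, f c, rfl⟩
      | add s t hs ht => rw [map_add, map_add]; exact Submodule.add_mem _ hs ht
  have hker : LinearMap.ker s₁ = LinearMap.ker s₂ := hker₁.trans hker₂.symm
  refine ⟨(((s₁.quotKerEquivOfSurjective hs₁).symm.trans
    (Submodule.quotEquivOfEq _ _ hker)).trans (s₂.quotKerEquivOfSurjective hs₂)), ?_⟩
  intro a ha c
  set t : N ⊗[K] C := (⟨a, ha⟩ : N) ⊗ₜ[K] c with htdef
  have h1 : s₁ t = Submodule.Quotient.mk (⟨a, ha⟩ : N) ⊗ₜ[K] c := by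
    rw [htdef, hs₁def, LinearMap.rTensor_tmul]
    rfl
  have h2 : (s₁.quotKerEquivOfSurjective hs₁).symm
      (Submodule.Quotient.mk (⟨a, ha⟩ : N) ⊗ₜ[K] c) = Submodule.Quotient.mk t := by
    rw [LinearEquiv.symm_apply_eq, quotKerEquivOfSurjective_apply_mk, h1]
  simp only [LinearEquiv.trans_apply, h2, Submodule.quotEquivOfEq_mk,
    quotKerEquivOfSurjective_apply_mk]
  rw [hs₂def, LinearMap.comp_apply, Submodule.mkQ_apply]
  congr 1

end AuxQuot
theorem stmt2
    (K : Type*) [Field K]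
    (A B C : Type*)
    [AddCommGroup A] [Module K A] [AddCommGroup B] [Module K B] [AddCommGroup C] [Module K C]
    (SA : GradedHopfStr K A) (SB : GradedHopfStr K B) (SC : GradedHopfStr K C)
    (hA : SA.Connected) (hB : SB.Connected) (hC : SC.Connected)
    (i : A →ₗ[K] B) (π : B →ₗ[K] C)
    (hi : ∀ n : ℕ, ∀ a ∈ SA.grading n, i a ∈ SB.grading n)
    (hπ : ∀ n : ℕ, ∀ b ∈ SB.grading n, π b ∈ SC.grading n)
    (hses : IsHopfSES SA.toHopfStr SB.toHopfStr SC.toHopfStr i π) :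
    -- (1) existence of a graded linear splitting of π
    (∃ f : C →ₗ[K] B, (∀ n : ℕ, ∀ c ∈ SC.grading n, f c ∈ SB.grading n)
        ∧ π.comp f = LinearMap.id)
    -- (2) each graded splitting induces an isomorphism (𝒜₊ⁿ/𝒜₊ⁿ⁺¹) ⊗ 𝒞 ≅ 𝒜₊ⁿℬ/𝒜₊ⁿ⁺¹ℬ
    ∧ (∀ f : C →ₗ[K] B, (∀ n : ℕ, ∀ c ∈ SC.grading n, f c ∈ SB.grading n) →
        π.comp f = LinearMap.id → ∀ n : ℕ,
        ∃ e : ((augPow SA.toHopfStr n ⧸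
                  (augPow SA.toHopfStr (n+1)).comap (augPow SA.toHopfStr n).subtype) ⊗[K] C)
              ≃ₗ[K]
              (augPowSmul SA.toHopfStr SB.toHopfStr i n ⧸
                  (augPowSmul SA.toHopfStr SB.toHopfStr i (n+1)).comap
                    (augPowSmul SA.toHopfStr SB.toHopfStr i n).subtype),
          ∀ (a : A) (ha : a ∈ augPow SA.toHopfStr n) (c : C),
            e (Submodule.Quotient.mk (⟨a, ha⟩ : augPow SA.toHopfStr n) ⊗ₜ[K] c)
              = Submodule.Quotient.mk
                  (⟨SB.mul (i a) (f c), Submodule.subset_span ⟨a, ha, f c, rfl⟩⟩ :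
                    augPowSmul SA.toHopfStr SB.toHopfStr i n))
    -- (3) the isomorphism does not depend on the choice of the graded splitting
    ∧ (∀ f g : C →ₗ[K] B,
        (∀ n : ℕ, ∀ c ∈ SC.grading n, f c ∈ SB.grading n) → π.comp f = LinearMap.id →
        (∀ n : ℕ, ∀ c ∈ SC.grading n, g c ∈ SB.grading n) → π.comp g = LinearMap.id →
        ∀ n : ℕ, ∀ a ∈ augPow SA.toHopfStr n, ∀ c : C,
          SB.mul (i a) (f c) - SB.mul (i a) (g c)
            ∈ augPowSmul SA.toHopfStr SB.toHopfStr i (n+1))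
    -- (4) the isomorphism is natural in the short exact sequence
    ∧ (∀ (A' B' C' : Type _)
        (_ : AddCommGroup A') (_ : Module K A') (_ : AddCommGroup B') (_ : Module K B')
        (_ : AddCommGroup C') (_ : Module K C')
        (SA' : GradedHopfStr K A') (SB' : GradedHopfStr K B') (SC' : GradedHopfStr K C'),
        SA'.Connected → SB'.Connected → SC'.Connected →
        ∀ (i' : A' →ₗ[K] B') (π' : B' →ₗ[K] C'),
        (∀ n : ℕ, ∀ a ∈ SA'.grading n, i' a ∈ SB'.grading n) →
        (∀ n : ℕ, ∀ b ∈ SB'.grading n, π' b ∈ SC'.grading n) →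
        IsHopfSES SA'.toHopfStr SB'.toHopfStr SC'.toHopfStr i' π' →
        ∀ (αA : A →ₗ[K] A') (αB : B →ₗ[K] B') (αC : C →ₗ[K] C'),
        IsHopfHom SA.toHopfStr SA'.toHopfStr αA →
        IsHopfHom SB.toHopfStr SB'.toHopfStr αB →
        IsHopfHom SC.toHopfStr SC'.toHopfStr αC →
        (∀ n : ℕ, ∀ a ∈ SA.grading n, αA a ∈ SA'.grading n) →
        (∀ n : ℕ, ∀ b ∈ SB.grading n, αB b ∈ SB'.grading n) →
        (∀ n : ℕ, ∀ c ∈ SC.grading n, αC c ∈ SC'.grading n) →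
        αB.comp i = i'.comp αA → αC.comp π = π'.comp αB →
        ∀ (f : C →ₗ[K] B) (g : C' →ₗ[K] B'),
        (∀ n : ℕ, ∀ c ∈ SC.grading n, f c ∈ SB.grading n) → π.comp f = LinearMap.id →
        (∀ n : ℕ, ∀ c ∈ SC'.grading n, g c ∈ SB'.grading n) → π'.comp g = LinearMap.id →
        ∀ n : ℕ, ∀ a ∈ augPow SA.toHopfStr n, ∀ c : C,
          αB (SB.mul (i a) (f c)) - SB'.mul (i' (αA a)) (g (αC c))
            ∈ augPowSmul SA'.toHopfStr SB'.toHopfStr i' (n+1)) := by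
  obtain ⟨f₀, hf₀g, hf₀s⟩ := exists_graded_splitting hπ hses.2.2.2.1
  refine ⟨⟨f₀, hf₀g, hf₀s⟩, ?_, ?_, ?_⟩
  · -- (2) the isomorphism
    intro f hf hfsplit n
    exact part2_iso hses
      (phiMap_surjective hses hA hi hπ hf hfsplit)
      (phiMap_injective hses hB hπ hf hfsplit) n
  · -- (3) independence of the splitting
    intro f g _ hfs _ hgs n a ha c
    have hdiff : f c - g c ∈ LinearMap.ker π := by
      rw [LinearMap.mem_ker, map_sub]
      have h1 : π (f c) = c := congrArg (fun h => h c) hfs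
      have h2 : π (g c) = c := congrArg (fun h => h c) hgs
      rw [h1, h2, sub_self]
    have := mul_ker_pi_mem hses ha hdiff
    rwa [map_sub] at this
  · -- (4) naturality
    intro A' B' C' _ _ _ _ _ _ SA' SB' SC' _ _ _ i' π' _ _ hses' αA αB αC hαA hαB hαC _ _ _
      hcommi hcommπ f g _ hfs _ hgs n a ha c
    have h1 : αB (SB.mul (i a) (f c)) = SB'.mul (i' (αA a)) (αB (f c)) := by
      rw [hαB.map_mul]
      have : αB (i a) = i' (αA a) := congrArg (fun h => h a) hcommi
      rw [this]
    have hz : αB (f c) - g (αC c) ∈ LinearMap.ker π' := by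
      rw [LinearMap.mem_ker, map_sub]
      have e1 : αC (π (f c)) = π' (αB (f c)) := congrArg (fun h => h (f c)) hcommπ
      have e2 : π (f c) = c := congrArg (fun h => h c) hfs
      have e3 : π' (g (αC c)) = αC c := congrArg (fun h => h (αC c)) hgs
      rw [← e1, e2, e3, sub_self]
    have := mul_ker_pi_mem hses' (augPow_map hαA n a ha) hz
    rw [map_sub] at this
    rwa [h1]
end
end

section
/- For every 𝔽₂-vector space V, the sequence 𝔽₂ → Sym(V) →^ℱ Sym(V) → Λ(V) → 𝔽₂, where ℱ is the Frobenius homomorphism (v ↦ v² on generators) and Sym(V) → Λ(V) is the canonical projection, is a short exact sequence in the abelian category of bicommutative Hopf algebras over 𝔽₂. -/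
open TensorProduct

noncomputable section

abbrev F2 := ZMod 2

/-- A commutative `K`-algebra structure on a `K`-module, given by linear data. -/
structure CommAlgStr (K : Type*) [Field K] (W : Type*) [AddCommGroup W] [Module K W] where
  mul : W →ₗ[K] W →ₗ[K] W
  one : W
  mul_assoc' : ∀ x y z : W, mul (mul x y) z = mul x (mul y z)
  mul_comm' : ∀ x y : W, mul x y = mul y x
  one_mul' : ∀ x : W, mul one x = x

/-- The underlying commutative algebra of a Hopf structure. -/
def HopfStr.toCommAlgStr {K : Type*} [Field K] {X : Type*} [AddCommGroup X] [Module K X]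
    (S : HopfStr K X) : CommAlgStr K X :=
  ⟨S.mul, S.one, S.mul_assoc', S.mul_comm', S.one_mul'⟩

/-- `g` is a homomorphism of algebras. -/
def IsAlgHomStr {K : Type*} [Field K] {X W : Type*} [AddCommGroup X] [Module K X]
    [AddCommGroup W] [Module K W] (SX : CommAlgStr K X) (SW : CommAlgStr K W)
    (g : X →ₗ[K] W) : Prop :=
  (∀ x y : X, g (SX.mul x y) = SW.mul (g x) (g y)) ∧ g SX.one = SW.one

/-- `(S, ι)` is the symmetric algebra `Sym(V)` with its standard bicommutative Hopf
algebra structure (`V` primitive): it has the universal property of the free commutative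
algebra on `V`, and the generators are primitive. -/
structure IsSymAlgebra {K : Type*} [Field K] {V X : Type*} [AddCommGroup V] [Module K V]
    [AddCommGroup X] [Module K X] (S : HopfStr K X) (ι : V →ₗ[K] X) : Prop where
  univ : ∀ (W : Type) (_ : AddCommGroup W) (_ : Module K W) (SW : CommAlgStr K W)
      (φ : V →ₗ[K] W), ∃! g : X →ₗ[K] W, IsAlgHomStr S.toCommAlgStr SW g ∧ g.comp ι = φ
  comul_gen : ∀ v : V, S.comul (ι v) = ι v ⊗ₜ[K] S.one + S.one ⊗ₜ[K] ι v
  counit_gen : ∀ v : V, S.counit (ι v) = 0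

/-- `(S, ι)` is the exterior algebra `Λ(V)` with its standard bicommutative Hopf algebra
structure (over `𝔽₂`; `V` primitive): it has the universal property of the free
commutative algebra on `V` with square-zero generators, and the generators are primitive. -/
structure IsExtAlgebra {K : Type*} [Field K] {V X : Type*} [AddCommGroup V] [Module K V]
    [AddCommGroup X] [Module K X] (S : HopfStr K X) (ι : V →ₗ[K] X) : Prop where
  sq_zero : ∀ v : V, S.mul (ι v) (ι v) = 0
  univ : ∀ (W : Type) (_ : AddCommGroup W) (_ : Module K W) (SW : CommAlgStr K W)
      (φ : V →ₗ[K] W), (∀ v : V, SW.mul (φ v) (φ v) = 0) →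
      ∃! g : X →ₗ[K] W, IsAlgHomStr S.toCommAlgStr SW g ∧ g.comp ι = φ
  comul_gen : ∀ v : V, S.comul (ι v) = ι v ⊗ₜ[K] S.one + S.one ⊗ₜ[K] ι v
  counit_gen : ∀ v : V, S.counit (ι v) = 0

namespace Stmt19Aux

/-- Build a `CommRing` from linear multiplication data. -/
@[reducible]
def commRingOf {K : Type*} [Field K] {W : Type*} [AddCommGroup W] [Module K W]
    (mul : W →ₗ[K] W →ₗ[K] W) (one : W)
    (hassoc : ∀ x y z : W, mul (mul x y) z = mul x (mul y z))
    (hcomm : ∀ x y : W, mul x y = mul y x)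
    (hone : ∀ x : W, mul one x = x) : CommRing W :=
  { (inferInstance : AddCommGroup W) with
    mul := fun x y => mul x y
    one := one
    mul_assoc := hassoc
    mul_comm := hcomm
    one_mul := hone
    mul_one := fun x => show mul x one = x by rw [hcomm]; exact hone x
    left_distrib := fun a b c => show mul a (b + c) = mul a b + mul a c from map_add (mul a) b c
    right_distrib := fun a b c => show mul (a + b) c = mul a c + mul b c by
      rw [map_add]; rfl
    zero_mul := fun a => show mul 0 a = 0 by rw [map_zero]; rfl
    mul_zero := fun a => show mul a 0 = 0 from map_zero (mul a) }


/-- The standard `CommAlgStr` of a commutative algebra. -/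
def stdAlgStr (K : Type*) [Field K] (W : Type*) [CommRing W] [Algebra K W] :
    CommAlgStr K W :=
  ⟨LinearMap.mul K W, 1, mul_assoc, mul_comm, one_mul⟩

theorem sq_add {R : Type*} [CommRing R] (h2 : (2 : R) = 0) (x y : R) :
    (x + y) * (x + y) = x * x + y * y := by
  have h : (x + y) * (x + y) = x * x + y * y + 2 * (x * y) := by ring
  rw [h, h2, zero_mul, add_zero]

theorem sq_sum {R : Type*} [CommRing R] (h2 : (2 : R) = 0) {ι : Type*} (s : Finset ι)
    (f : ι → R) : (∑ i ∈ s, f i) * (∑ i ∈ s, f i) = ∑ i ∈ s, f i * f i := by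
  classical
  induction s using Finset.induction_on with
  | empty => simp
  | insert a s hni ih =>
      rw [Finset.sum_insert hni, Finset.sum_insert hni, sq_add h2, ih]

theorem sq_mem_span {R : Type*} [CommRing R] (h2 : (2 : R) = 0) {s : Set R} {x : R}
    (hx : x ∈ Ideal.span s) : x * x ∈ Ideal.span ((fun y => y * y) '' s) := by
  refine Submodule.span_induction (p := fun x _ => x * x ∈ Ideal.span ((fun y => y * y) '' s))
    ?_ ?_ ?_ ?_ hx
  · intro y hy; exact Ideal.subset_span ⟨y, hy, rfl⟩
  · simp
  · intro a b _ _ ha hb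
    rw [sq_add h2]; exact Ideal.add_mem _ ha hb
  · intro c a _ ha
    rw [smul_eq_mul, show c * a * (c * a) = c * c * (a * a) by ring]
    exact Ideal.mul_mem_left _ _ ha

theorem sq_zero_span {R : Type*} [CommRing R] (h2 : (2 : R) = 0) {s : Set R}
    (hs : ∀ y ∈ s, y * y = 0) {x : R} (hx : x ∈ Ideal.span s) : x * x = 0 := by
  refine Submodule.span_induction (p := fun x _ => x * x = 0) ?_ ?_ ?_ ?_ hx
  · exact hs
  · simp
  · intro a b _ _ ha hb; rw [sq_add h2, ha, hb, add_zero]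
  · intro c a _ ha
    rw [smul_eq_mul, show c * a * (c * a) = c * c * (a * a) by ring, ha, mul_zero]

open MvPolynomial

theorem two_eq_zero_poly {B : Type*} : (2 : MvPolynomial B F2) = 0 := by
  rw [← map_ofNat (C : F2 →+* MvPolynomial B F2) 2, show (2 : F2) = 0 by decide, map_zero]

theorem coeff_pderiv {B : Type*} (p : MvPolynomial B F2) (b : B) (d : B →₀ ℕ) :
    coeff d (pderiv b p) = ((d b + 1 : ℕ) : F2) * coeff (d + Finsupp.single b 1) p := by
  classical
  induction p using MvPolynomial.induction_on' with
  | monomial u a =>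
      rw [pderiv_monomial, coeff_monomial, coeff_monomial]
      by_cases h : u = d + Finsupp.single b 1
      · subst h
        rw [if_pos (add_tsub_cancel_right (α := B →₀ ℕ) _ _), if_pos rfl]
        have hub : ((d + Finsupp.single b 1 : B →₀ ℕ)) b = d b + 1 := by
          simp
        rw [hub, mul_comm]
      · rw [if_neg h, mul_zero]
        by_cases h2 : u - Finsupp.single b 1 = d
        · rcases Nat.eq_zero_or_pos (u b) with h0 | hpos
          · rw [if_pos h2, h0]; simp
          · exfalso; apply h
            ext c
            have hc := congrArg (fun f : B →₀ ℕ => f c) h2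
            simp only [Finsupp.tsub_apply] at hc
            by_cases hcb : c = b
            · subst hcb
              simp only [Finsupp.single_eq_same] at hc
              simp only [Finsupp.add_apply, Finsupp.single_eq_same]
              omega
            · have h1 : Finsupp.single b 1 c = 0 := by
                rw [Finsupp.single_apply, if_neg fun hbc => hcb hbc.symm]
              simp only [h1, Nat.sub_zero] at hc
              simp [Finsupp.add_apply, h1, hc]
        · rw [if_neg h2]
  | add p q hp hq =>
      rw [map_add, coeff_add, coeff_add, hp, hq, mul_add]

theorem support_even_of_pderiv_zero {B : Type*} (p : MvPolynomial B F2)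
    (h : ∀ b, pderiv b p = 0) {d : B →₀ ℕ} (hd : d ∈ p.support) (b : B) : d b % 2 = 0 := by
  classical
  by_contra hodd
  have h1 : d b % 2 = 1 := by omega
  have hdb : 1 ≤ d b := by omega
  have hb := congrArg (coeff (d - Finsupp.single b 1)) (h b)
  rw [coeff_pderiv, coeff_zero] at hb
  have he : (d - Finsupp.single b 1) + Finsupp.single b 1 = d := by
    ext c
    by_cases hcb : c = b
    · subst hcb
      simp only [Finsupp.add_apply, Finsupp.tsub_apply, Finsupp.single_eq_same]
      omega
    · have h1 : Finsupp.single b 1 c = 0 := by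
        rw [Finsupp.single_apply, if_neg fun hbc => hcb hbc.symm]
      simp [Finsupp.add_apply, Finsupp.tsub_apply, h1]
  rw [he] at hb
  have h2 : ((d - Finsupp.single b 1 : B →₀ ℕ)) b + 1 = d b := by
    simp only [Finsupp.tsub_apply, Finsupp.single_eq_same]
    omega
  rw [h2] at hb
  have hcast : ((d b : ℕ) : F2) = 1 := by
    rw [← ZMod.natCast_mod, h1, Nat.cast_one]
  rw [hcast, one_mul] at hb
  exact (MvPolynomial.mem_support_iff.mp hd) hb

theorem exists_sq_eq {B : Type*} (p : MvPolynomial B F2)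
    (h : ∀ d ∈ p.support, ∀ b, d b % 2 = 0) : ∃ r, r * r = p := by
  classical
  refine ⟨∑ d ∈ p.support, monomial (Finsupp.mapRange (· / 2) (by simp) d) (coeff d p), ?_⟩
  rw [sq_sum two_eq_zero_poly]
  calc (∑ d ∈ p.support,
        monomial (Finsupp.mapRange (· / 2) (by simp) d) (coeff d p) *
          monomial (Finsupp.mapRange (· / 2) (by simp) d) (coeff d p))
      = ∑ d ∈ p.support, monomial d (coeff d p) := by
        refine Finset.sum_congr rfl fun d hd => ?_
        rw [monomial_mul]
        have h1 : (Finsupp.mapRange (· / 2) (by simp) d) + (Finsupp.mapRange (· / 2) (by simp) d) = d := by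
          ext c
          have := h d hd c
          simp only [Finsupp.add_apply, Finsupp.mapRange_apply]
          omega
        have h2 : ∀ a : F2, a * a = a := by decide
        rw [h1, h2]
    _ = p := support_sum_monomial_coeff p

theorem mem_span_X_of_constantCoeff {B : Type*} (p : MvPolynomial B F2)
    (h : constantCoeff p = 0) :
    p ∈ Ideal.span (Set.range (X : B → MvPolynomial B F2)) := by
  rw [← Set.image_univ, mem_ideal_span_X_image]
  intro d hd
  have hdz : d ≠ 0 := by
    rintro rfl
    rw [MvPolynomial.mem_support_iff] at hd
    rw [constantCoeff_eq] at h
    exact hd h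
  obtain ⟨i, hi⟩ := Finsupp.ne_iff.mp hdz
  exact ⟨i, trivial, by simpa using hi⟩

end Stmt19Aux


/-!
STATEMENT 19.
For every `𝔽₂`-vector space `V`, the sequence
`𝔽₂ → Sym(V) →^ℱ Sym(V) → Λ(V) → 𝔽₂`,
where `ℱ` is the Frobenius homomorphism (`v ↦ v²` on generators) and `Sym(V) → Λ(V)` is
the canonical projection (identity on generators), is a short exact sequence in the
abelian category of bicommutative Hopf algebras over `𝔽₂`.
-/
set_option maxHeartbeats 2000000 in
theorem stmt19
    (V X L : Type)
    [AddCommGroup V] [Module F2 V] [AddCommGroup X] [Module F2 X] [AddCommGroup L] [Module F2 L]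
    (S : HopfStr F2 X) (ι : V →ₗ[F2] X) (hS : IsSymAlgebra S ι)
    (SL : HopfStr F2 L) (ιL : V →ₗ[F2] L) (hL : IsExtAlgebra SL ιL)
    -- the Frobenius homomorphism of Hopf algebras, v ↦ v² on generators
    (F : X →ₗ[F2] X) (hF : IsHopfHom S S F)
    (hFgen : ∀ v : V, F (ι v) = S.mul (ι v) (ι v))
    -- the canonical projection Sym(V) → Λ(V), identity on generators
    (pr : X →ₗ[F2] L) (hpr : IsHopfHom S SL pr)
    (hprgen : ∀ v : V, pr (ι v) = ιL v) :
    IsHopfSES S S SL F pr := by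
  classical
  letI : CommRing X := Stmt19Aux.commRingOf S.mul S.one S.mul_assoc' S.mul_comm' S.one_mul'
  letI : Algebra F2 X := Algebra.ofModule
    (fun r x y => by
      show S.mul (r • x) y = r • S.mul x y
      rw [map_smul]; rfl)
    (fun r x y => by
      show S.mul x (r • y) = r • S.mul x y
      rw [map_smul])
  letI : CommRing L := Stmt19Aux.commRingOf SL.mul SL.one SL.mul_assoc' SL.mul_comm' SL.one_mul'
  letI : Algebra F2 L := Algebra.ofModule
    (fun r x y => by
      show SL.mul (r • x) y = r • SL.mul x y
      rw [map_smul]; rfl)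
    (fun r x y => by
      show SL.mul x (r • y) = r • SL.mul x y
      rw [map_smul])
  have mulX : ∀ x y : X, S.mul x y = x * y := fun _ _ => rfl
  have oneX : S.one = (1 : X) := rfl
  have mulL : ∀ x y : L, SL.mul x y = x * y := fun _ _ => rfl
  have oneL : SL.one = (1 : L) := rfl
  have two0X : (2 : X) = 0 := by
    rw [← map_ofNat (algebraMap F2 X) 2, show (2 : F2) = 0 by decide, map_zero]
  have two0L : (2 : L) = 0 := by
    rw [← map_ofNat (algebraMap F2 L) 2, show (2 : F2) = 0 by decide, map_zero]
  have addselfX : ∀ x : X, x + x = 0 := fun x => by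
    rw [← two_mul, two0X, zero_mul]
  -- uniqueness of algebra maps out of X
  have uniqS : ∀ (W : Type) (_ : CommRing W) (_ : Algebra F2 W) (g₁ g₂ : X →ₐ[F2] W),
      (∀ v, g₁ (ι v) = g₂ (ι v)) → ∀ x, g₁ x = g₂ x := by
    intro W _ _ g₁ g₂ hg x
    obtain ⟨g, -, hu⟩ := hS.univ W inferInstance inferInstance (Stmt19Aux.stdAlgStr F2 W)
      (g₂.toLinearMap ∘ₗ ι)
    have h1 : g₁.toLinearMap = g := hu g₁.toLinearMap
      ⟨⟨fun a b => g₁.map_mul a b, g₁.map_one⟩, LinearMap.ext hg⟩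
    have h2 : g₂.toLinearMap = g := hu g₂.toLinearMap
      ⟨⟨fun a b => g₂.map_mul a b, g₂.map_one⟩, rfl⟩
    exact congrArg (fun f : X →ₗ[F2] W => f x) (h1.trans h2.symm)
  -- uniqueness of algebra maps out of L
  have uniqL : ∀ (W : Type) (_ : CommRing W) (_ : Algebra F2 W) (g₁ g₂ : L →ₐ[F2] W),
      (∀ v, g₁ (ιL v) = g₂ (ιL v)) → ∀ x, g₁ x = g₂ x := by
    intro W _ _ g₁ g₂ hg x
    obtain ⟨g, -, hu⟩ := hL.univ W inferInstance inferInstance (Stmt19Aux.stdAlgStr F2 W)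
      (g₂.toLinearMap ∘ₗ ιL) (fun v => by
        show g₂ (ιL v) * g₂ (ιL v) = 0
        rw [← map_mul g₂, ← mulL, hL.sq_zero, map_zero])
    have h1 : g₁.toLinearMap = g := hu g₁.toLinearMap
      ⟨⟨fun a b => g₁.map_mul a b, g₁.map_one⟩, LinearMap.ext hg⟩
    have h2 : g₂.toLinearMap = g := hu g₂.toLinearMap
      ⟨⟨fun a b => g₂.map_mul a b, g₂.map_one⟩, rfl⟩
    exact congrArg (fun f : L →ₗ[F2] W => f x) (h1.trans h2.symm)
  -- algebra hom packagings
  let Falg : X →ₐ[F2] X := AlgHom.ofLinearMap F hF.map_one hF.map_mul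
  let pralg : X →ₐ[F2] L := AlgHom.ofLinearMap pr hpr.map_one hpr.map_mul
  -- the polynomial model
  let bV := Module.Basis.ofVectorSpace F2 V
  let B := Module.Basis.ofVectorSpaceIndex F2 V
  let eA : MvPolynomial B F2 →ₐ[F2] X := MvPolynomial.aeval (fun b => ι (bV b))
  let φ₀ : V →ₗ[F2] MvPolynomial B F2 := bV.constr F2 (fun b => MvPolynomial.X b)
  obtain ⟨gl, ⟨⟨glmul, glone⟩, glcomp⟩, -⟩ := hS.univ (MvPolynomial B F2) inferInstance
    inferInstance (Stmt19Aux.stdAlgStr F2 (MvPolynomial B F2)) φ₀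
  let gA : X →ₐ[F2] MvPolynomial B F2 := AlgHom.ofLinearMap gl glone glmul
  have heX : ∀ b : B, eA (MvPolynomial.X b) = ι (bV b) := fun b => MvPolynomial.aeval_X _ b
  have hgι : ∀ v, gA (ι v) = φ₀ v := fun v => DFunLike.congr_fun glcomp v
  have hφ₀ : ∀ b : B, φ₀ (bV b) = MvPolynomial.X b := fun b => bV.constr_basis F2 _ b
  have hge : ∀ p, gA (eA p) = p := by
    have h : gA.comp eA = AlgHom.id F2 (MvPolynomial B F2) := by
      apply MvPolynomial.algHom_ext
      intro b
      show gA (eA (MvPolynomial.X b)) = MvPolynomial.X b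
      rw [heX, hgι, hφ₀]
    exact fun p => DFunLike.congr_fun h p
  have heφ₀ : ∀ v, eA (φ₀ v) = ι v := by
    have h : eA.toLinearMap ∘ₗ φ₀ = ι := by
      apply bV.ext
      intro b
      show eA (φ₀ (bV b)) = ι (bV b)
      rw [hφ₀, heX]
    exact fun v => DFunLike.congr_fun h v
  have heg : ∀ x, eA (gA x) = x := by
    have h := uniqS X inferInstance inferInstance (eA.comp gA) (AlgHom.id F2 X) (fun v => by
      show eA (gA (ι v)) = ι v
      rw [hgι, heφ₀])
    exact h
  -- Frobenius is squaring
  let sqL : X →ₗ[F2] X :=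
    { toFun := fun x => x * x
      map_add' := fun x y => Stmt19Aux.sq_add two0X x y
      map_smul' := fun r x => by
        rcases (by decide : ∀ r : F2, r = 0 ∨ r = 1) r with h | h <;> subst h <;> simp }
  let sqalg : X →ₐ[F2] X := AlgHom.ofLinearMap sqL (by show (1 : X) * 1 = 1; rw [one_mul])
    (fun x y => by show (x * y) * (x * y) = (x * x) * (y * y); ring)
  have hFsq : ∀ x : X, F x = x * x := by
    have h := uniqS X inferInstance inferInstance Falg sqalg (fun v => by
      show F (ι v) = ι v * ι v
      rw [hFgen]; rfl)
    exact h
  -- injectivity of Frobenius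
  have hFinj : Function.Injective F := by
    intro a b hab
    have h0 : (a + b) * (a + b) = 0 := by
      rw [Stmt19Aux.sq_add two0X, ← hFsq, ← hFsq, hab, ← two_mul, two0X, zero_mul]
    have h1 : gA (a + b) * gA (a + b) = 0 := by
      rw [← map_mul, h0, map_zero]
    have h2 : gA (a + b) = 0 := mul_self_eq_zero.mp h1
    have h3 : a + b = 0 := by
      have h4 := congrArg eA h2
      rw [heg, map_zero] at h4
      exact h4
    exact add_right_cancel (h3.trans (addselfX b).symm)
  -- surjectivity of the projection
  have hprsurj : Function.Surjective pr := by
    have hrange : Algebra.adjoin F2 (Set.range ιL) ≤ pralg.range := by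
      apply Algebra.adjoin_le
      rintro _ ⟨v, rfl⟩
      exact ⟨ι v, hprgen v⟩
    set A := Algebra.adjoin F2 (Set.range ιL) with hA
    let φA : V →ₗ[F2] A := ιL.codRestrict (Subalgebra.toSubmodule A)
      (fun v => Algebra.subset_adjoin ⟨v, rfl⟩)
    obtain ⟨gw, ⟨⟨gwmul, gwone⟩, gwcomp⟩, -⟩ := hL.univ A inferInstance inferInstance
      (Stmt19Aux.stdAlgStr F2 A) φA (fun v => by
        apply Subtype.ext
        show ιL v * ιL v = 0
        rw [← mulL, hL.sq_zero])
    let gAlg : L →ₐ[F2] A := AlgHom.ofLinearMap gw gwone gwmul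
    have hval : ∀ x : L, (A.val.comp gAlg) x = x := by
      apply uniqL L inferInstance inferInstance (A.val.comp gAlg) (AlgHom.id F2 L)
      intro v
      show ((gw (ιL v) : A) : L) = ιL v
      rw [show gw (ιL v) = φA v from DFunLike.congr_fun gwcomp v]
      rfl
    intro y
    have hy : y ∈ A := by
      rw [← hval y]
      exact (gAlg y).2
    obtain ⟨x, hx⟩ := hrange hy
    exact ⟨x, hx⟩
  refine ⟨hF, hpr, hFinj, hprsurj, ?_, ?_⟩
  · -- range F is the Hopf kernel of pr
    have hmulTT : ∀ u w : X ⊗[F2] X,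
        TensorProduct.homTensorHomMap (RingHom.id F2) X X X X (TensorProduct.map S.mul S.mul u) w = u * w := by
      intro u w
      induction u using TensorProduct.induction_on with
      | zero => rw [map_zero, map_zero, LinearMap.zero_apply, zero_mul]
      | tmul a c =>
          induction w using TensorProduct.induction_on with
          | zero => rw [map_zero, mul_zero]
          | tmul a' c' =>
              rw [TensorProduct.map_tmul, TensorProduct.homTensorHomMap_apply,
                TensorProduct.map_tmul, Algebra.TensorProduct.tmul_mul_tmul]
              rfl
          | add w1 w2 h1 h2 => rw [map_add, mul_add, h1, h2]
      | add u1 u2 h1 h2 =>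
          rw [map_add, map_add, LinearMap.add_apply, h1, h2, add_mul]
    let Δalg : X →ₐ[F2] X ⊗[F2] X := AlgHom.ofLinearMap S.comul
      (by show S.comul S.one = 1
          rw [S.comul_one, oneX, ← Algebra.TensorProduct.one_def])
      (fun x y => by
        show S.comul (x * y) = S.comul x * S.comul y
        rw [← mulX, S.comul_mul, hmulTT])
    let prT : X ⊗[F2] X →ₐ[F2] X ⊗[F2] L := Algebra.TensorProduct.map (AlgHom.id F2 X) pralg
    have hprT : ∀ u : X ⊗[F2] X, prT u = TensorProduct.map LinearMap.id pr u := by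
      intro u
      induction u using TensorProduct.induction_on with
      | zero => rw [map_zero, map_zero]
      | tmul a c => rfl
      | add u1 u2 h1 h2 => rw [map_add, map_add, h1, h2]
    let gX : X →ₐ[F2] X ⊗[F2] L := prT.comp Δalg
    have two0T : (2 : X ⊗[F2] L) = 0 := by
      rw [← map_ofNat (algebraMap F2 (X ⊗[F2] L)) 2, show (2 : F2) = 0 by decide, map_zero]
    have hgXι : ∀ v : V, gX (ι v) = ι v ⊗ₜ[F2] (1 : L) + (1 : X) ⊗ₜ[F2] ιL v := by
      intro v
      show prT (S.comul (ι v)) = _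
      rw [hS.comul_gen, map_add, Algebra.TensorProduct.map_tmul,
        Algebra.TensorProduct.map_tmul]
      rw [show pralg S.one = 1 by rw [show pralg S.one = pr S.one from rfl, hpr.map_one, oneL]]
      rw [show pralg (ι v) = ιL v from hprgen v]
      rw [show (AlgHom.id F2 X) (ι v) = ι v from rfl,
        show (AlgHom.id F2 X) S.one = (1 : X) from oneX]
    have hsub : ∀ x : X, gX (F x) = F x ⊗ₜ[F2] (1 : L) := by
      have h := uniqS (X ⊗[F2] L) inferInstance inferInstance (gX.comp Falg)
        ((Algebra.TensorProduct.includeLeft (A := X) (B := L) (S := F2)).comp Falg) (fun v => by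
          show gX (F (ι v)) = F (ι v) ⊗ₜ[F2] (1 : L)
          have e1 : gX (F (ι v)) = (ι v * ι v) ⊗ₜ[F2] (1 : L) := by
            rw [hFgen, mulX, map_mul, hgXι, Stmt19Aux.sq_add two0T,
              Algebra.TensorProduct.tmul_mul_tmul, Algebra.TensorProduct.tmul_mul_tmul,
              mul_one, one_mul, ← mulL, hL.sq_zero, TensorProduct.tmul_zero, add_zero]
          rw [e1, hFgen, mulX])
      exact h
    refine le_antisymm ?_ ?_
    · -- range F ≤ Hopf kernel
      rintro _ ⟨x, rfl⟩
      rw [LinearMap.mem_ker, LinearMap.sub_apply, LinearMap.comp_apply]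
      have h1 : TensorProduct.map LinearMap.id pr (S.comul (F x)) = gX (F x) :=
        (hprT (S.comul (F x))).symm
      rw [h1, hsub x, show ((TensorProduct.mk F2 X L).flip SL.one) (F x)
        = F x ⊗ₜ[F2] SL.one from rfl, oneL, sub_self]
    · -- Hopf kernel ≤ range F
      intro x hx
      rw [LinearMap.mem_ker, LinearMap.sub_apply, LinearMap.comp_apply, sub_eq_zero] at hx
      have hx1 : TensorProduct.map LinearMap.id pr (S.comul x) = x ⊗ₜ[F2] (1 : L) := by
        rw [hx]
        show x ⊗ₜ[F2] SL.one = x ⊗ₜ[F2] (1 : L)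
        rw [oneL]
      have hpd : ∀ b : B, MvPolynomial.pderiv b (gA x) = 0 := by
        intro b
        -- dual numbers functional detecting the coefficient of (the class of) X b
        let ψφ : V →ₗ[F2] DualNumber F2 := (TrivSqZeroExt.inrHom F2 F2) ∘ₗ (bV.coord b)
        obtain ⟨ψl, ⟨⟨ψmul, ψone⟩, ψcomp⟩, -⟩ := hL.univ (DualNumber F2) inferInstance
          inferInstance (Stmt19Aux.stdAlgStr F2 (DualNumber F2)) ψφ (fun v => by
            have h1 : ∀ u w : DualNumber F2,
                (Stmt19Aux.stdAlgStr F2 (DualNumber F2)).mul u w = u * w := fun u w => rfl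
            have h0 : ψφ v = TrivSqZeroExt.inr ((bV.coord b) v) := rfl
            rw [h1, h0, TrivSqZeroExt.inr_mul_inr])
        let ψ : L →ₐ[F2] DualNumber F2 := AlgHom.ofLinearMap ψl ψone ψmul
        let Ψ : X →ₐ[F2] DualNumber F2 := ψ.comp pralg
        let εalg2 : X →ₐ[F2] F2 := AlgHom.ofLinearMap S.counit S.counit_one S.counit_mul
        have hfst : ∀ y : X, TrivSqZeroExt.fst (Ψ y) = S.counit y := by
          have h := uniqS F2 inferInstance inferInstance
            ((TrivSqZeroExt.fstHom F2 F2 F2).comp Ψ) εalg2 (fun v => by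
              show TrivSqZeroExt.fst (ψl (pr (ι v))) = S.counit (ι v)
              rw [hprgen, hS.counit_gen,
                show ψl (ιL v) = ψφ v from DFunLike.congr_fun ψcomp v]
              exact TrivSqZeroExt.fst_inr _ _)
          exact h
        let lb : X →ₗ[F2] F2 := (TrivSqZeroExt.sndHom F2 F2) ∘ₗ ψl ∘ₗ pr
        have hlbmul : ∀ y z : X, lb (y * z) = S.counit y * lb z + lb y * S.counit z := by
          intro y z
          have h1 : lb (y * z) = TrivSqZeroExt.snd (Ψ y * Ψ z) := by
            show TrivSqZeroExt.snd (ψl (pr (y * z))) = _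
            rw [show pr (y * z) = pr y * pr z from hpr.map_mul y z,
              show ψl (pr y * pr z) = ψl (pr y) * ψl (pr z) from ψmul (pr y) (pr z)]
            rfl
          rw [h1, TrivSqZeroExt.snd_mul]
          rw [op_smul_eq_smul, smul_eq_mul, smul_eq_mul]
          rw [show TrivSqZeroExt.fst (Ψ y) = S.counit y from hfst y,
            show TrivSqZeroExt.fst (Ψ z) = S.counit z from hfst z]
          show S.counit y * lb z + S.counit z * lb y = _
          ring
        have hlbone : lb (1 : X) = 0 := by
          show TrivSqZeroExt.snd (ψl (pr (1 : X))) = 0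
          rw [show pr (1 : X) = (1 : L) from by rw [← oneX, hpr.map_one, oneL],
            show ψl (1 : L) = 1 from ψone]
          exact TrivSqZeroExt.snd_one
        have hlbgen : ∀ v, lb (ι v) = bV.coord b v := by
          intro v
          show TrivSqZeroExt.snd (ψl (pr (ι v))) = _
          rw [hprgen, show ψl (ιL v) = ψφ v from DFunLike.congr_fun ψcomp v]
          exact TrivSqZeroExt.snd_inr _ _
        let Mb : X ⊗[F2] X →ₗ[F2] X := (TensorProduct.rid F2 X).toLinearMap ∘ₗ
          TensorProduct.map LinearMap.id lb
        let Eb : X ⊗[F2] X →ₗ[F2] X := (TensorProduct.rid F2 X).toLinearMap ∘ₗ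
          TensorProduct.map LinearMap.id S.counit
        let Db : X →ₗ[F2] X := Mb ∘ₗ S.comul
        have hMb : ∀ a c : X, Mb (a ⊗ₜ[F2] c) = lb c • a := by
          intro a c
          show (TensorProduct.rid F2 X) (TensorProduct.map LinearMap.id lb (a ⊗ₜ[F2] c)) = _
          rw [TensorProduct.map_tmul, TensorProduct.rid_tmul]
          rfl
        have hEb : ∀ a c : X, Eb (a ⊗ₜ[F2] c) = S.counit c • a := by
          intro a c
          show (TensorProduct.rid F2 X)
            (TensorProduct.map LinearMap.id S.counit (a ⊗ₜ[F2] c)) = _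
          rw [TensorProduct.map_tmul, TensorProduct.rid_tmul]
          rfl
        have hsmulmul : ∀ (r s : F2) (m n : X), (r • m) * (s • n) = (r * s) • (m * n) := by
          intro r s m n
          rw [smul_mul_assoc, mul_smul_comm, smul_smul]
        have hMbmul : ∀ u w : X ⊗[F2] X, Mb (u * w) = Eb u * Mb w + Mb u * Eb w := by
          intro u w
          induction u using TensorProduct.induction_on with
          | zero => rw [zero_mul, map_zero, map_zero, zero_mul, zero_mul, add_zero]
          | tmul a c =>
              induction w using TensorProduct.induction_on with
              | zero => rw [mul_zero, map_zero, map_zero, mul_zero, mul_zero, add_zero]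
              | tmul a' c' =>
                  rw [Algebra.TensorProduct.tmul_mul_tmul, hMb, hEb, hMb, hEb, hMb,
                    hlbmul, hsmulmul, hsmulmul, add_smul]
              | add w1 w2 h1 h2 =>
                  rw [mul_add, map_add, map_add, map_add, h1, h2]
                  ring
          | add u1 u2 h1 h2 =>
              rw [add_mul, map_add, map_add, map_add, h1, h2]
              ring
        have hEΔ : ∀ y : X, Eb (S.comul y) = y := by
          intro y
          have h1 : ∀ u : X ⊗[F2] X, Eb ((TensorProduct.comm F2 X X) u) =
              (TensorProduct.lid F2 X) (TensorProduct.map S.counit LinearMap.id u) := by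
            intro u
            induction u using TensorProduct.induction_on with
            | zero => rw [map_zero, map_zero, map_zero, map_zero]
            | tmul a c =>
                rw [TensorProduct.comm_tmul, hEb, TensorProduct.map_tmul,
                  TensorProduct.lid_tmul]
                rfl
            | add u1 u2 e1 e2 => rw [map_add, map_add, map_add, map_add, e1, e2]
          have h2 := DFunLike.congr_fun S.counit_comul y
          have h3 : (TensorProduct.comm F2 X X) (S.comul y) = S.comul y :=
            DFunLike.congr_fun S.cocomm y
          calc Eb (S.comul y) = Eb ((TensorProduct.comm F2 X X) (S.comul y)) := by rw [h3]
            _ = (TensorProduct.lid F2 X)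
                (TensorProduct.map S.counit LinearMap.id (S.comul y)) := h1 _
            _ = y := h2
        have hDmul : ∀ y z : X, Db (y * z) = y * Db z + Db y * z := by
          intro y z
          show Mb (S.comul (y * z)) = _
          rw [← mulX, S.comul_mul, hmulTT, hMbmul, hEΔ, hEΔ]
          rfl
        have hD1 : Db (1 : X) = 0 := by
          have h := hDmul 1 1
          rw [mul_one, one_mul, mul_one] at h
          exact (left_eq_add.mp h)
        have hDι : ∀ v, Db (ι v) = (bV.coord b v) • (1 : X) := by
          intro v
          show Mb (S.comul (ι v)) = _
          rw [hS.comul_gen, map_add, hMb, hMb, oneX, hlbone, hlbgen, zero_smul, zero_add]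
        have hDx : Db x = 0 := by
          have h2 := congrArg (fun u : X ⊗[F2] L =>
            (TensorProduct.rid F2 X) (TensorProduct.map LinearMap.id
              ((TrivSqZeroExt.sndHom F2 F2) ∘ₗ ψl) u)) hx1
          have h3 : ∀ u : X ⊗[F2] X,
              (TensorProduct.rid F2 X) (TensorProduct.map LinearMap.id
                ((TrivSqZeroExt.sndHom F2 F2) ∘ₗ ψl) (TensorProduct.map LinearMap.id pr u))
              = Mb u := by
            intro u
            induction u using TensorProduct.induction_on with
            | zero => rw [map_zero, map_zero, map_zero, map_zero]
            | tmul a c =>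
                rw [TensorProduct.map_tmul, TensorProduct.map_tmul,
                  TensorProduct.rid_tmul, hMb]
                rfl
            | add u1 u2 e1 e2 => rw [map_add, map_add, map_add, map_add, e1, e2]
          rw [h3 (S.comul x)] at h2
          rw [TensorProduct.map_tmul, TensorProduct.rid_tmul] at h2
          rw [show ((TrivSqZeroExt.sndHom F2 F2) ∘ₗ ψl) (1 : L)
            = (0 : F2) from by
              show TrivSqZeroExt.snd (ψl (1 : L)) = 0
              rw [show ψl (1 : L) = 1 from ψone]
              exact TrivSqZeroExt.snd_one, zero_smul] at h2
          exact h2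
        let Dm : Derivation F2 (MvPolynomial B F2) (MvPolynomial B F2) :=
          { toLinearMap := gA.toLinearMap ∘ₗ Db ∘ₗ eA.toLinearMap
            map_one_eq_zero' := by
              show gA (Db (eA 1)) = 0
              rw [map_one, hD1, map_zero]
            leibniz' := fun p q => by
              show gA (Db (eA (p * q))) = _
              rw [map_mul, hDmul, map_add, map_mul, map_mul, hge, hge]
              show _ = p • (gA (Db (eA q))) + q • (gA (Db (eA p)))
              rw [smul_eq_mul, smul_eq_mul]
              ring }
        have hDm : Dm = MvPolynomial.pderiv b := by
          apply MvPolynomial.derivation_ext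
          intro c
          show gA (Db (eA (MvPolynomial.X c))) = MvPolynomial.pderiv b (MvPolynomial.X c)
          rw [heX, hDι, map_smul, map_one, MvPolynomial.pderiv_X]
          rw [show bV.coord b (bV c) = (Finsupp.single c (1 : F2)) b from by
            rw [Module.Basis.coord_apply, Module.Basis.repr_self]]
          by_cases hcb : c = b
          · subst hcb
            rw [Finsupp.single_eq_same, Pi.single_eq_same, one_smul]
          · rw [Finsupp.single_eq_of_ne (Ne.symm hcb), Pi.single_eq_of_ne hcb, zero_smul]
        rw [← hDm]
        show gA (Db (eA (gA x))) = 0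
        rw [heg, hDx, map_zero]
      obtain ⟨r, hr⟩ := Stmt19Aux.exists_sq_eq (gA x)
        (fun d hd c => Stmt19Aux.support_even_of_pderiv_zero (gA x) hpd hd c)
      refine ⟨eA r, ?_⟩
      rw [hFsq, ← map_mul, hr, heg]
  · -- the kernel of `pr` is the ideal generated by the image of the augmentation ideal
    set T := Submodule.span F2
      {y : X | ∃ a ∈ LinearMap.ker S.counit, ∃ b : X, y = S.mul (F a) b} with hT
    have Tmul : ∀ c : X, ∀ x ∈ T, c * x ∈ T := by
      intro c x hx
      refine Submodule.span_induction ?_ ?_ ?_ ?_ hx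
      · rintro y ⟨a, ha, b, rfl⟩
        apply Submodule.subset_span
        refine ⟨a, ha, c * b, ?_⟩
        rw [mulX, mulX]
        ring
      · rw [mul_zero]; exact T.zero_mem
      · intro u w _ _ hu hw; rw [mul_add]; exact T.add_mem hu hw
      · intro r u _ hu; rw [mul_smul_comm]; exact T.smul_mem r hu
    have spanleT : ∀ s : Set X, (∀ y ∈ s, y ∈ T) → ∀ x ∈ Ideal.span s, x ∈ T := by
      intro s hs x hx
      refine Submodule.span_induction ?_ ?_ ?_ ?_ hx
      · exact hs
      · exact T.zero_mem
      · intro u w _ _ hu hw; exact T.add_mem hu hw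
      · intro c u _ hu; rw [smul_eq_mul]; exact Tmul c u hu
    have hεe : ∀ p : MvPolynomial B F2, S.counit (eA p) = MvPolynomial.constantCoeff p := by
      let εalg : X →ₐ[F2] F2 := AlgHom.ofLinearMap S.counit S.counit_one S.counit_mul
      have h : εalg.comp eA = MvPolynomial.aeval (fun _ => (0 : F2)) := by
        apply MvPolynomial.algHom_ext
        intro b
        show εalg (eA (MvPolynomial.X b)) = _
        rw [heX]
        show S.counit (ι (bV b)) = _
        rw [hS.counit_gen, MvPolynomial.aeval_X]
      intro p
      have h2 := DFunLike.congr_fun h p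
      rw [MvPolynomial.aeval_zero'] at h2
      exact h2
    have εker : ∀ a : X, S.counit a = 0 →
        a ∈ Ideal.span (Set.range (fun v : V => ι v)) := by
      intro a ha
      have hp : MvPolynomial.constantCoeff (gA a) = 0 := by
        rw [← hεe (gA a), heg, ha]
      have hmem := Stmt19Aux.mem_span_X_of_constantCoeff _ hp
      have hmap : eA (gA a) ∈ Ideal.map eA
          (Ideal.span (Set.range (MvPolynomial.X : B → MvPolynomial B F2))) :=
        Ideal.mem_map_of_mem _ hmem
      rw [Ideal.map_span, heg] at hmap
      refine Ideal.span_mono ?_ hmap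
      rintro _ ⟨_, ⟨b, rfl⟩, rfl⟩
      exact ⟨bV b, (heX b).symm⟩
    have sqker : ∀ a : X, S.counit a = 0 → pr a * pr a = 0 := by
      intro a ha
      have h1 : pr a ∈ Ideal.span (Set.range (fun v : V => ιL v)) := by
        have h3 : pralg a ∈ Ideal.map pralg
            (Ideal.span (Set.range (fun v : V => ι v))) :=
          Ideal.mem_map_of_mem _ (εker a ha)
        rw [Ideal.map_span] at h3
        refine Ideal.span_mono ?_ h3
        rintro _ ⟨_, ⟨v, rfl⟩, rfl⟩
        exact ⟨v, (hprgen v).symm⟩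
      refine Stmt19Aux.sq_zero_span two0L ?_ h1
      rintro _ ⟨v, rfl⟩
      rw [← mulL, hL.sq_zero]
    refine le_antisymm ?_ ?_
    · -- ker pr ≤ T
      intro x hx
      rw [LinearMap.mem_ker] at hx
      set I : Ideal (MvPolynomial B F2) :=
        Ideal.span ((fun y => y * y) '' Set.range (MvPolynomial.X : B → MvPolynomial B F2))
        with hI
      let mkq : MvPolynomial B F2 →ₐ[F2] (MvPolynomial B F2 ⧸ I) := Ideal.Quotient.mkₐ F2 I
      have hφ₀span : ∀ v : V, φ₀ v ∈
          Ideal.span (Set.range (MvPolynomial.X : B → MvPolynomial B F2)) := by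
        intro v
        rw [show φ₀ v = (bV.repr v).sum fun b c => c • MvPolynomial.X b from
          bV.constr_apply F2 _ v]
        refine Submodule.sum_mem _ fun b _ =>
          Submodule.smul_of_tower_mem _ _ (Ideal.subset_span ⟨b, rfl⟩)
      obtain ⟨gq, ⟨⟨gqmul, gqone⟩, gqcomp⟩, -⟩ := hL.univ (MvPolynomial B F2 ⧸ I) inferInstance
        inferInstance (Stmt19Aux.stdAlgStr F2 (MvPolynomial B F2 ⧸ I))
        (mkq.toLinearMap ∘ₗ φ₀) (fun v => by
          show mkq (φ₀ v) * mkq (φ₀ v) = 0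
          rw [← map_mul, Ideal.Quotient.mkₐ_eq_mk, Ideal.Quotient.eq_zero_iff_mem]
          exact Stmt19Aux.sq_mem_span Stmt19Aux.two_eq_zero_poly (hφ₀span v))
      let gQ : L →ₐ[F2] MvPolynomial B F2 ⧸ I := AlgHom.ofLinearMap gq gqone gqmul
      have hcomm : (gQ.comp pralg).comp eA = mkq := by
        apply MvPolynomial.algHom_ext
        intro b
        show gQ (pralg (eA (MvPolynomial.X b))) = mkq (MvPolynomial.X b)
        rw [heX]
        show gq (pr (ι (bV b))) = mkq (MvPolynomial.X b)
        rw [hprgen, show gq (ιL (bV b)) = (mkq.toLinearMap ∘ₗ φ₀) (bV b) from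
          DFunLike.congr_fun gqcomp (bV b)]
        show mkq (φ₀ (bV b)) = _
        rw [hφ₀]
      have hpx : mkq (gA x) = 0 := by
        have h1 := DFunLike.congr_fun hcomm (gA x)
        rw [AlgHom.comp_apply, AlgHom.comp_apply, heg] at h1
        rw [← h1, show pralg x = pr x from rfl, hx, map_zero]
      have hmem : gA x ∈ I := by
        rw [Ideal.Quotient.mkₐ_eq_mk, Ideal.Quotient.eq_zero_iff_mem] at hpx
        exact hpx
      have hmap : x ∈ Ideal.span (eA ''
          ((fun y => y * y) '' Set.range (MvPolynomial.X : B → MvPolynomial B F2))) := by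
        have h5 : eA (gA x) ∈ Ideal.map eA I := Ideal.mem_map_of_mem _ hmem
        rw [hI, Ideal.map_span] at h5
        rwa [heg] at h5
      refine spanleT _ ?_ x hmap
      rintro _ ⟨_, ⟨_, ⟨b, rfl⟩, rfl⟩, rfl⟩
      apply Submodule.subset_span
      refine ⟨ι (bV b), ?_, 1, ?_⟩
      · rw [LinearMap.mem_ker, hS.counit_gen]
      · rw [map_mul, heX, mulX, mul_one, ← hFsq]
    · -- T ≤ ker pr
      rw [hT]
      apply Submodule.span_le.mpr
      rintro y ⟨a, ha, b, rfl⟩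
      rw [SetLike.mem_coe, LinearMap.mem_ker]
      have h1 : pr (S.mul (F a) b) = pr (F a) * pr b := by
        rw [hpr.map_mul, mulL]
      rw [h1, show pr (F a) = pr (S.mul a a) by rw [hFsq, mulX],
        hpr.map_mul, mulL, sqker a (LinearMap.mem_ker.mp ha), zero_mul]
end
end
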